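/- arXiv:1612.09093 — 9 statements merged into one kernel-verified Lean document; each statement's English description precedes it below -/
import Mathlib

section
/- If A and B are distinct equivalence classes of ~0 and x ∈ A, y ∈ B satisfy x ~1 y, then x' ~1 y' for all x' ∈ A and y' ∈ B. -/
open SimpleGraph

/-- A leaf of a graph: a vertex with exactly one neighbor. -/
def TIsLeaf {V : Type*} (T : SimpleGraph V) (x : V) : Prop := ∃! y, T.Adj x y

/-- `Rel0 T ℓ x y`: every edge on the (unique) path from `x` to `y` is labeled `0`. -/
def Rel0 {V : Type*} (T : SimpleGraph V) (ℓ : Sym2 V → Bool) (x y : V) : Prop :=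
  ∃ p : T.Walk x y, p.IsPath ∧ ∀ e ∈ p.edges, ℓ e = false

/-- `Rel1 T ℓ x y`: exactly one edge on the (unique) path from `x` to `y` is labeled
`1` and all others `0`. -/
def Rel1 {V : Type*} (T : SimpleGraph V) (ℓ : Sym2 V → Bool) (x y : V) : Prop :=
  ∃ p : T.Walk x y, p.IsPath ∧ (p.edges.filter ℓ).length = 1

/-- From a walk all of whose edges are labeled `0`, we get `Rel0`. -/
lemma rel0_of_walk {V : Type*} (T : SimpleGraph V) (ℓ : Sym2 V → Bool) {a b : V}
    (w : T.Walk a b) (hw : ∀ e ∈ w.edges, ℓ e = false) : Rel0 T ℓ a b := by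
  classical
  exact ⟨w.bypass, w.bypass_isPath, fun e he => hw e (w.edges_bypass_subset he)⟩

/-- If `A` and `B` are distinct `~0`-classes (i.e. `¬ x ~0 y`), `x ∈ A`, `y ∈ B` and
`x ~1 y`, then `x' ~1 y'` for all `x' ∈ A` (i.e. `x ~0 x'`) and `y' ∈ B`
(i.e. `y ~0 y'`). -/
theorem rel1_of_rel0_classes {V : Type*} (T : SimpleGraph V) (hT : T.IsTree)
    (ℓ : Sym2 V → Bool) (x y x' y' : V)
    (hx : TIsLeaf T x) (hy : TIsLeaf T y) (hx' : TIsLeaf T x') (hy' : TIsLeaf T y')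
    (hAB : ¬ Rel0 T ℓ x y) (h1 : Rel1 T ℓ x y)
    (hxx' : Rel0 T ℓ x x') (hyy' : Rel0 T ℓ y y') :
    Rel1 T ℓ x' y' := by
  classical
  obtain ⟨p, hp, hp1⟩ := h1
  obtain ⟨q, hq, hq0⟩ := hxx'
  obtain ⟨r, hr, hr0⟩ := hyy'
  -- the walk x' → x → y → y'
  set w : T.Walk x' y' := q.reverse.append (p.append r) with hw
  have hwedges : w.edges = q.edges.reverse ++ (p.edges ++ r.edges) := by
    simp [hw, Walk.edges_append, Walk.edges_reverse]
  have hqf : (q.edges.reverse.filter ℓ) = [] := List.filter_eq_nil_iff.mpr (by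
    intro e he; simp only [List.mem_reverse] at he; simp [hq0 e he])
  have hrf : (r.edges.filter ℓ) = [] := List.filter_eq_nil_iff.mpr (by
    intro e he; simp [hr0 e he])
  have hwfilter : (w.edges.filter ℓ).length = 1 := by
    rw [hwedges, List.filter_append, List.filter_append, hqf, hrf]
    simpa using hp1
  -- bypass to a path
  refine ⟨w.bypass, w.bypass_isPath, ?_⟩
  have hle : ((w.bypass.edges.filter ℓ)).length ≤ 1 := by
    have hnd : (w.bypass.edges.filter ℓ).Nodup :=
      (w.bypass_isPath.edges_nodup).filter ℓ
    have hsub : (w.bypass.edges.filter ℓ) ⊆ (w.edges.filter ℓ) := by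
      intro e he
      rw [List.mem_filter] at he ⊢
      exact ⟨w.edges_bypass_subset he.1, he.2⟩
    have := (List.subperm_of_subset hnd hsub).length_le
    omega
  rcases Nat.lt_or_ge (w.bypass.edges.filter ℓ).length 1 with hlt | hge
  · exfalso
    have h0 : ∀ e ∈ w.bypass.edges, ℓ e = false := by
      intro e he
      by_contra hcon
      have : e ∈ w.bypass.edges.filter ℓ := by
        rw [List.mem_filter]
        exact ⟨he, by simpa using hcon⟩
      have hzero : (w.bypass.edges.filter ℓ).length = 0 := by omega
      rw [List.length_eq_zero_iff.mp hzero] at this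
      simp at this
    -- then x ~0 y via x → x' → y' → y, contradiction
    apply hAB
    refine rel0_of_walk T ℓ (q.append (w.bypass.append r.reverse)) ?_
    intro e he
    simp only [Walk.edges_append, Walk.edges_reverse, List.mem_append,
      List.mem_reverse] at he
    rcases he with he | he | he
    · exact hq0 e he
    · exact h0 e he
    · exact hr0 e he
  · omega
end

section
/- If x ~1 y and x ~1 z with y ≠ z, then y ~1 z does not hold. -/
open SimpleGraph

section Aux
variable {V : Type*} {T : SimpleGraph V} (hT : T.IsTree) (ℓ : Sym2 V → Bool) (x : V)

noncomputable def thePath (v : V) : T.Walk x v := (hT.existsUnique_path x v).choose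

lemma thePath_isPath (v : V) : (thePath hT x v).IsPath := (hT.existsUnique_path x v).choose_spec.1

lemma thePath_unique {v : V} (p : T.Walk x v) (hp : p.IsPath) : p = thePath hT x v :=
  (hT.existsUnique_path x v).choose_spec.2 p hp

noncomputable def pot (v : V) : ZMod 2 := ((thePath hT x v).edges.filter ℓ).length

lemma edge_pot {a b : V} (h : T.Adj a b) :
    ((if ℓ s(a, b) then 1 else 0 : ZMod 2)) = pot hT ℓ x a + pot hT ℓ x b := by
  classical
  set Pa := thePath hT x a with hPa
  by_cases hb : b ∈ Pa.support
  · -- b on path to a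
    have hta : Pa.IsPath := thePath_isPath hT x a
    have htake : (Pa.takeUntil b hb).IsPath := hta.takeUntil hb
    have hdrop : (Pa.dropUntil b hb).IsPath := hta.dropUntil hb
    have hPb : Pa.takeUntil b hb = thePath hT x b := thePath_unique hT x _ htake
    -- the unique path from b to a is the single edge
    have hne : b ≠ a := fun e => T.irrefl (e ▸ h)
    have hsingle : (Walk.cons h.symm Walk.nil : T.Walk b a).IsPath := Walk.IsPath.nil.cons (by simp [hne])
    have hdrop_eq : Pa.dropUntil b hb = Walk.cons h.symm Walk.nil := by
      have h1 := thePath_unique hT b (Pa.dropUntil b hb) hdrop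
      have h2 := thePath_unique hT b (Walk.cons h.symm Walk.nil) hsingle
      rw [h1, h2]
    have hspec := Pa.take_spec hb
    have : Pa.edges = (Pa.takeUntil b hb).edges ++ (Pa.dropUntil b hb).edges := by
      conv_lhs => rw [← hspec]
      exact Walk.edges_append _ _
    have hlen : ((Pa.edges.filter ℓ).length : ZMod 2) =
        (((Pa.takeUntil b hb).edges.filter ℓ).length : ZMod 2)
        + (((Pa.dropUntil b hb).edges.filter ℓ).length : ZMod 2) := by
      rw [this, List.filter_append, List.length_append]; push_cast; ring
    rw [hdrop_eq] at hlen
    simp only [Walk.edges_cons, Walk.edges_nil] at hlen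
    have hc : ((([s(b, a)].filter ℓ)).length : ZMod 2) = if ℓ s(a, b) then 1 else 0 := by
      rw [Sym2.eq_swap (a := b) (b := a)]
      by_cases hl : ℓ s(a, b) <;> simp [hl]
    unfold pot
    rw [← hPa, ← hPb, hlen, hc]
    ring_nf
    simp [show (2:ZMod 2) = 0 from rfl]
  · -- b not on path to a : extend
    have hta : Pa.IsPath := thePath_isPath hT x a
    have hcon : (Pa.concat h).IsPath := by
      rw [← Walk.isPath_reverse_iff, Walk.reverse_concat]
      exact hta.reverse.cons (by simpa [Walk.support_reverse] using hb)
    have hPb : Pa.concat h = thePath hT x b := thePath_unique hT x _ hcon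
    unfold pot
    rw [← hPa, ← hPb, Walk.edges_concat, List.concat_eq_append, List.filter_append,
      List.length_append]
    push_cast
    by_cases hl : ℓ s(a, b) <;> simp [hl] <;> ring_nf <;>
      simp [show (2:ZMod 2) = 0 from rfl]
lemma walk_pot : ∀ {a b : V} (w : T.Walk a b),
    ((w.edges.filter ℓ).length : ZMod 2) = pot hT ℓ x a + pot hT ℓ x b := by
  intro a b w
  induction w with
  | nil =>
    have : ∀ t : ZMod 2, t + t = 0 := by decide
    simp [this]
  | @cons u c d h p ih =>
    have h2 : ∀ t : ZMod 2, t + t = 0 := by decide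
    have he := edge_pot hT ℓ x h
    rw [Walk.edges_cons, List.filter_cons]
    by_cases hl : ℓ s(u, c) <;> simp only [hl, if_true, if_false, ite_true, ite_false,
      List.length_cons] <;> push_cast <;> rw [ih] <;> simp [hl] at he
    · linear_combination he + h2 (pot hT ℓ x c)
    · linear_combination -he - h2 (pot hT ℓ x u)

end Aux


/-- If `x ~1 y` and `x ~1 z` with `y ≠ z`, then `y ~1 z` does not hold. -/
theorem not_rel1_of_rel1_rel1 {V : Type*} (T : SimpleGraph V) (hT : T.IsTree)
    (ℓ : Sym2 V → Bool) (x y z : V)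
    (hx : TIsLeaf T x) (hy : TIsLeaf T y) (hz : TIsLeaf T z)
    (hyz : y ≠ z) (h1 : Rel1 T ℓ x y) (h2 : Rel1 T ℓ x z) :
    ¬ Rel1 T ℓ y z := by
  rintro ⟨r, hr, hrc⟩
  obtain ⟨p, hp, hpc⟩ := h1
  obtain ⟨q, hq, hqc⟩ := h2
  have e1 := walk_pot hT ℓ x p
  have e2 := walk_pot hT ℓ x q
  have e3 := walk_pot hT ℓ x r
  rw [hpc] at e1; rw [hqc] at e2; rw [hrc] at e3
  push_cast at e1 e2 e3
  have h2 : ∀ t : ZMod 2, t + t = 0 := by decide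
  have : (1 : ZMod 2) = 0 := by
    linear_combination e1 + e2 + e3 + h2 (pot hT ℓ x x) + h2 (pot hT ℓ x y) + h2 (pot hT ℓ x z) - h2 1
  exact one_ne_zero this
end

section
/- The graph G on the set of ~0-equivalence classes, with an edge between classes c_i ≠ c_j whenever some x ∈ c_i and y ∈ c_j satisfy x ~1 y, is a forest (contains no cycles). -/
open SimpleGraph

section Aux

variable {V : Type*} {T : SimpleGraph V} {ℓ : Sym2 V → Bool}

lemma rel0_refl (x : V) : Rel0 T ℓ x x :=
  ⟨SimpleGraph.Walk.nil, SimpleGraph.Walk.IsPath.nil, by simp⟩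

lemma rel0_of_all_false {x y : V} (p : T.Walk x y) (h : ∀ e ∈ p.edges, ℓ e = false) :
    Rel0 T ℓ x y := by
  classical
  exact ⟨p.bypass, p.bypass_isPath, fun e he => h e (p.edges_bypass_subset he)⟩

lemma rel0_symm {x y : V} (h : Rel0 T ℓ x y) : Rel0 T ℓ y x := by
  obtain ⟨p, hp, h0⟩ := h
  exact rel0_of_all_false p.reverse (by
    intro e he
    rw [SimpleGraph.Walk.edges_reverse, List.mem_reverse] at he
    exact h0 e he)

lemma rel0_trans {x y z : V} (h1 : Rel0 T ℓ x y) (h2 : Rel0 T ℓ y z) : Rel0 T ℓ x z := by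
  obtain ⟨p, hp, hp0⟩ := h1
  obtain ⟨q, hq, hq0⟩ := h2
  refine rel0_of_all_false (p.append q) ?_
  intro e he
  rw [SimpleGraph.Walk.edges_append, List.mem_append] at he
  rcases he with h | h
  · exact hp0 e h
  · exact hq0 e h

lemma rel1_symm {x y : V} (h : Rel1 T ℓ x y) : Rel1 T ℓ y x := by
  obtain ⟨p, hp, h1⟩ := h
  refine ⟨p.reverse, hp.reverse, ?_⟩
  rw [SimpleGraph.Walk.edges_reverse, List.filter_reverse, List.length_reverse]
  exact h1

/-- In an acyclic graph, any walk between the endpoints of an edge uses that edge. -/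
lemma no_detour (hT : T.IsAcyclic) {u v : V} (h : T.Adj u v)
    (W : T.Walk u v) (hW : s(u, v) ∉ W.edges) : False := by
  classical
  have h1 : (SimpleGraph.Path.singleton h : T.Path u v) = W.toPath :=
    hT.path_unique _ _
  apply hW
  apply W.edges_bypass_subset
  have h2 : s(u, v) ∈ (SimpleGraph.Path.singleton h : T.Walk u v).edges :=
    SimpleGraph.Path.mk'_mem_edges_singleton h
  rw [h1] at h2
  exact h2

/-- Splitting a trail whose unique `1`-labeled edge is `f`. -/
lemma split_walk {s t : V} (p : T.Walk s t) (hnd : p.edges.Nodup) {f : Sym2 V}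
    (hf : f ∈ p.edges) (hft : ℓ f = true)
    (huniq : ∀ e ∈ p.edges, ℓ e = true → e = f) :
    ∃ u v, T.Adj u v ∧ f = s(u, v) ∧ Rel0 T ℓ s u ∧ Rel0 T ℓ v t := by
  induction p with
  | nil => simp at hf
  | @cons a b c h q ih =>
    rw [SimpleGraph.Walk.edges_cons, List.nodup_cons] at hnd
    by_cases hc : ℓ s(a, b) = true
    · have hfe : s(a, b) = f := huniq _ (by simp) hc
      refine ⟨a, b, h, hfe.symm, rel0_refl a, ?_⟩
      refine rel0_of_all_false q ?_
      intro e he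
      by_contra hcon
      have : ℓ e = true := by
        cases hb : ℓ e
        · exact absurd hb hcon
        · rfl
      have hef : e = f := huniq e (by simp [he]) this
      exact hnd.1 (by rw [hfe, ← hef]; exact he)
    · have hc' : ℓ s(a, b) = false := by
        cases hb : ℓ s(a, b)
        · rfl
        · exact absurd hb hc
      have hfq : f ∈ q.edges := by
        rcases (by simpa using hf : f = s(a, b) ∨ f ∈ q.edges) with h' | h'
        · rw [h'] at hft; exact absurd hft hc
        · exact h'
      obtain ⟨u, v, huv, hfe, h1, h2⟩ :=
        ih hnd.2 hfq (fun e he het => huniq e (by simp [he]) het)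
      refine ⟨u, v, huv, hfe, ?_, h2⟩
      have hab : Rel0 T ℓ a b :=
        rel0_of_all_false (SimpleGraph.Walk.cons h SimpleGraph.Walk.nil)
          (by intro e he; simp at he; rw [he]; exact hc')
      exact rel0_trans hab h1

/-- Gluing `Rel0`–`Rel1`–`Rel0` gives a walk with a single distinguished `1`-edge. -/
lemma exists_one_edge {a b x y : V} (h0 : Rel0 T ℓ a x) (h1 : Rel1 T ℓ x y)
    (h2 : Rel0 T ℓ y b) :
    ∃ u v, T.Adj u v ∧ ℓ s(u, v) = true ∧ Rel0 T ℓ a u ∧ Rel0 T ℓ v b ∧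
      ∃ P : T.Walk a b, ∀ f ∈ P.edges, ℓ f = true → f = s(u, v) := by
  obtain ⟨p0, hp0, hp00⟩ := h0
  obtain ⟨p1, hp1, hp11⟩ := h1
  obtain ⟨p2, hp2, hp22⟩ := h2
  obtain ⟨f, hfeq⟩ := List.length_eq_one_iff.mp hp11
  have hfmem : f ∈ p1.edges ∧ ℓ f = true := by
    have : f ∈ p1.edges.filter ℓ := by rw [hfeq]; simp
    simpa using List.mem_filter.mp this
  have huniq1 : ∀ e ∈ p1.edges, ℓ e = true → e = f := by
    intro e he het
    have : e ∈ p1.edges.filter ℓ := List.mem_filter.mpr ⟨he, het⟩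
    rw [hfeq] at this
    simpa using this
  obtain ⟨u, v, huv, hfe, hxu, hvy⟩ :=
    split_walk p1 hp1.edges_nodup hfmem.1 hfmem.2 huniq1
  refine ⟨u, v, huv, hfe ▸ hfmem.2, rel0_trans ⟨p0, hp0, hp00⟩ hxu,
    rel0_trans hvy ⟨p2, hp2, hp22⟩, p0.append (p1.append p2), ?_⟩
  intro e he het
  rw [SimpleGraph.Walk.edges_append, SimpleGraph.Walk.edges_append] at he
  simp only [List.mem_append] at he
  rcases he with h' | h' | h'
  · rw [hp00 e h'] at het; exact absurd het (by simp)
  · exact hfe ▸ huniq1 e h' het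
  · rw [hp22 e h'] at het; exact absurd het (by simp)

/-- Lifting a path in the quotient graph to a walk in the tree avoiding a fixed
distinguished edge. -/
lemma lift_walk {Q : Type*} {G : SimpleGraph Q} (r : Q → V)
    (key : ∀ c₁ c₂ : Q, Rel0 T ℓ (r c₁) (r c₂) → c₁ = c₂)
    (adj_lemma : ∀ {a b : Q}, G.Adj a b →
      ∃ u v, T.Adj u v ∧ ℓ s(u, v) = true ∧ Rel0 T ℓ (r a) u ∧ Rel0 T ℓ v (r b) ∧
        ∃ P : T.Walk (r a) (r b), ∀ f ∈ P.edges, ℓ f = true → f = s(u, v))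
    {qq bb : Q} {u v : V}
    (hqu : Rel0 T ℓ (r qq) u) (hvb : Rel0 T ℓ v (r bb)) :
    ∀ {d e : Q} (w : G.Walk d e), w.IsPath → s(bb, qq) ∉ w.edges → e = qq →
      ∃ W : T.Walk (r d) (r e), ∀ f ∈ W.edges, ℓ f = true → f ≠ s(u, v) := by
  intro d e w
  induction w with
  | nil => exact fun _ _ _ => ⟨SimpleGraph.Walk.nil, by simp⟩
  | @cons d d' e h' w' ih =>
    intro hw hbq he
    have hw' : w'.IsPath := hw.of_cons
    have hbq' : s(bb, qq) ∉ w'.edges := fun hmem => hbq (by simp [hmem])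
    obtain ⟨W', hW'⟩ := ih hw' hbq' he
    obtain ⟨u', v', hu'v', hℓ', hdu', hv'd', P', hP'⟩ := adj_lemma h'
    refine ⟨P'.append W', ?_⟩
    intro f hf hft
    rw [SimpleGraph.Walk.edges_append, List.mem_append] at hf
    rcases hf with hf | hf
    · intro hfe
      have heq : s(u, v) = s(u', v') := by rw [← hfe, hP' f hf hft]
      rcases Sym2.eq_iff.mp heq with ⟨h1, h2⟩ | ⟨h1, h2⟩
      · -- u = u', v = v' : then qq = d, impossible for a path ending at qq
        have hqd : qq = d := key _ _ (rel0_trans hqu (h1 ▸ rel0_symm hdu'))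
        have hdq : d ≠ e := by
          have h1 := hw.support_nodup
          rw [SimpleGraph.Walk.support_cons, List.nodup_cons] at h1
          exact fun hh => h1.1 (hh ▸ w'.end_mem_support)
        exact hdq (hqd ▸ he.symm)
      · -- u = v', v = u' : then d = bb and d' = qq, i.e. the edge s(bb,qq)
        have hvu' : Rel0 T ℓ u' (r bb) := h2 ▸ hvb
        have hdb : d = bb := key _ _ (rel0_trans hdu' hvu')
        have huv' : Rel0 T ℓ v' (r d') := hv'd'
        have hd'q : d' = qq := (key _ _ (rel0_trans hqu (h1 ▸ huv'))).symm
        apply hbq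
        rw [← hdb, ← hd'q]
        simp
    · exact hW' f hf hft

end Aux

/-- The quotient graph `G(~1)/~0`, whose vertices are the `~0`-equivalence classes of
leaves and whose edges join distinct classes containing a `~1`-related pair, is a
forest (it contains no cycles). -/
theorem quotient_graph_isAcyclic {V : Type*} (T : SimpleGraph V) (hT : T.IsTree)
    (ℓ : Sym2 V → Bool)
    (hEq : Equivalence (fun x y : {v : V // TIsLeaf T v} => Rel0 T ℓ x.1 y.1)) :
    (SimpleGraph.fromRel
      (fun a b : Quotient (Setoid.mk (fun x y : {v : V // TIsLeaf T v} =>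
          Rel0 T ℓ x.1 y.1) hEq) =>
        ∃ x y : {v : V // TIsLeaf T v},
          Quotient.mk _ x = a ∧ Quotient.mk _ y = b ∧ Rel1 T ℓ x.1 y.1)).IsAcyclic := by
  set S : Setoid {v : V // TIsLeaf T v} :=
    Setoid.mk (fun x y : {v : V // TIsLeaf T v} => Rel0 T ℓ x.1 y.1) hEq with hS
  set G := SimpleGraph.fromRel
      (fun a b : Quotient S =>
        ∃ x y : {v : V // TIsLeaf T v},
          Quotient.mk _ x = a ∧ Quotient.mk _ y = b ∧ Rel1 T ℓ x.1 y.1) with hG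
  intro q c hc
  -- representative of a class
  let r : Quotient S → V := fun a => (Quotient.out a).1
  have hout : ∀ a : Quotient S, Quotient.mk S (Quotient.out a) = a := fun a => Quotient.out_eq a
  -- Rel0 between representatives forces equality of classes
  have key : ∀ c₁ c₂ : Quotient S, Rel0 T ℓ (r c₁) (r c₂) → c₁ = c₂ := by
    intro c₁ c₂ h
    have : Quotient.mk S (Quotient.out c₁) = Quotient.mk S (Quotient.out c₂) :=
      Quotient.sound h
    rwa [hout, hout] at this
  -- a class equals the class of any Rel0-related leaf
  have keymk : ∀ (a : Quotient S) (x : {v : V // TIsLeaf T v}),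
      Quotient.mk S x = a → Rel0 T ℓ (r a) x.1 := by
    intro a x hx
    have : Quotient.mk S (Quotient.out a) = Quotient.mk S x := by rw [hout, hx]
    exact Quotient.exact this
  -- adjacency in the quotient graph yields a distinguished 1-edge
  have adj_lemma : ∀ {a b : Quotient S}, G.Adj a b →
      ∃ u v, T.Adj u v ∧ ℓ s(u, v) = true ∧ Rel0 T ℓ (r a) u ∧ Rel0 T ℓ v (r b) ∧
        ∃ P : T.Walk (r a) (r b), ∀ f ∈ P.edges, ℓ f = true → f = s(u, v) := by
    intro a b hab
    rw [hG, SimpleGraph.fromRel_adj] at hab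
    rcases hab.2 with ⟨x, y, hx, hy, hxy⟩ | ⟨x, y, hx, hy, hxy⟩
    · exact exists_one_edge (keymk a x hx) hxy (rel0_symm (keymk b y hy))
    · exact exists_one_edge (keymk a y hy) (rel1_symm hxy) (rel0_symm (keymk b x hx))
  -- decompose the cycle
  cases c with
  | nil => exact hc.ne_nil rfl
  | cons h p =>
    rename_i b
    rw [SimpleGraph.Walk.cons_isCycle_iff] at hc
    obtain ⟨hp, hqb⟩ := hc
    obtain ⟨u, v, huv, hℓuv, hqu, hvb, -⟩ := adj_lemma h
    obtain ⟨W, hW⟩ := lift_walk r key (fun {a b} => adj_lemma) hqu hvb p hp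
      (by rw [Sym2.eq_swap]; exact hqb) rfl
    -- build a walk from v to u avoiding the edge s(u,v): contradiction with acyclicity
    obtain ⟨pv, hpv, hpv0⟩ := hvb
    obtain ⟨pu, hpu, hpu0⟩ := hqu
    refine no_detour hT.IsAcyclic huv.symm (pv.append (W.append pu)) ?_
    intro hmem
    rw [SimpleGraph.Walk.edges_append, SimpleGraph.Walk.edges_append] at hmem
    simp only [List.mem_append] at hmem
    have hsw : s(v, u) = s(u, v) := Sym2.eq_swap
    rcases hmem with h' | h' | h'
    · have := hpv0 _ h'
      rw [hsw] at this
      rw [this] at hℓuv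
      exact absurd hℓuv (by simp)
    · exact hW _ h' (by rw [hsw]; exact hℓuv) hsw
    · have := hpu0 _ h'
      rw [hsw] at this
      rw [this] at hℓuv
      exact absurd hℓuv (by simp)
end

section
/- Let (T, λ) be a least resolved tree explaining a connected single-1-relation graph with discrete ~0. Then every edge labeled 0 is incident to a leaf, and every inner vertex of T is incident to exactly one edge labeled 0. -/
open SimpleGraph

lemma tree_path_unique {V : Type*} {T : SimpleGraph V} (hT : T.IsTree) {x y : V}
    {p q : T.Walk x y} (hp : p.IsPath) (hq : q.IsPath) : p = q :=
  (hT.existsUnique_path x y).unique hp hq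

lemma tree_no_triangle {V : Type*} {T : SimpleGraph V} (hT : T.IsTree) {a b c : V}
    (h1 : T.Adj a b) (h2 : T.Adj b c) (hne : a ≠ c) : ¬ T.Adj a c := by
  intro h3
  have hp1 : (Walk.cons h3 Walk.nil : T.Walk a c).IsPath := by
    simp [Walk.isPath_def, hne]
  have hp2 : (Walk.cons h1 (Walk.cons h2 Walk.nil) : T.Walk a c).IsPath := by
    simp [Walk.isPath_def, hne, h1.ne, h2.ne]
  have := tree_path_unique hT hp1 hp2
  have := congrArg Walk.length this
  simp [Walk.length_cons] at this

lemma edge_mem_of_support {V : Type*} {T : SimpleGraph V} (hT : T.IsTree) {x y u v : V}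
    {p : T.Walk x y} (hp : p.IsPath) (huv : T.Adj u v)
    (hu : u ∈ p.support) (hv : v ∈ p.support) : s(u, v) ∈ p.edges := by
  classical
  have hsplit := p.take_spec hu
  have hv' : v ∈ (p.takeUntil u hu).support ∨ v ∈ (p.dropUntil u hu).support := by
    rw [← Walk.mem_support_append_iff, hsplit]; exact hv
  rcases hv' with hv1 | hv2
  · -- v before u : dropUntil v in takeUntil gives path v → u
    have hq : ((p.takeUntil u hu).dropUntil v hv1).IsPath :=
      (hp.takeUntil hu).dropUntil hv1
    have hone : (Walk.cons huv.symm Walk.nil : T.Walk v u).IsPath := by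
      simp [Walk.isPath_def, huv.ne']
    have := tree_path_unique hT hq hone
    have hmem : s(v, u) ∈ ((p.takeUntil u hu).dropUntil v hv1).edges := by
      rw [this]; simp
    have : s(v, u) ∈ p.edges := by
      have h1 := (p.takeUntil u hu).edges_dropUntil_subset hv1 hmem
      exact p.edges_takeUntil_subset hu h1
    rwa [Sym2.eq_swap]
  · have hq : ((p.dropUntil u hu).takeUntil v hv2).IsPath :=
      (hp.dropUntil hu).takeUntil hv2
    have hone : (Walk.cons huv Walk.nil : T.Walk u v).IsPath := by
      simp [Walk.isPath_def, huv.ne]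
    have := tree_path_unique hT hq hone
    have hmem : s(u, v) ∈ ((p.dropUntil u hu).takeUntil v hv2).edges := by
      rw [this]; simp
    have h1 := (p.dropUntil u hu).edges_takeUntil_subset hv2 hmem
    exact p.edges_dropUntil_subset hu h1

lemma head_edge_unique {V : Type*} {T : SimpleGraph V} {x y : V}
    {p : T.Walk x y} (hp : p.IsPath) {b b' : V}
    (hb : s(x, b) ∈ p.edges) (hb' : s(x, b') ∈ p.edges) : b = b' := by
  cases p with
  | nil => simp at hb
  | cons h q =>
    rename_i z
    rw [Walk.cons_isPath_iff] at hp
    have key : ∀ c : V, s(x, c) ∈ (Walk.cons h q).edges → c = z := by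
      intro c hc
      rw [Walk.edges_cons, List.mem_cons] at hc
      rcases hc with hc | hc
      · rw [Sym2.eq_iff] at hc
        rcases hc with ⟨_, h2⟩ | ⟨h1, _⟩
        · exact h2
        · exact absurd (h1 ▸ h) T.irrefl
      · exact absurd (Walk.fst_mem_support_of_mem_edges q hc) hp.2
    rw [key b hb, key b' hb']

lemma exists_head_edge {V : Type*} {T : SimpleGraph V} {x y : V}
    (p : T.Walk x y) (hxy : x ≠ y) : ∃ a, T.Adj x a ∧ s(x, a) ∈ p.edges := by
  cases p with
  | nil => exact absurd rfl hxy
  | cons h q => exact ⟨_, h, by simp⟩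

section Push
variable {V : Type*} {T : SimpleGraph V} (hT : T.IsTree) {u v : V} (huv : T.Adj u v)
  {T' : SimpleGraph {w : V // w ≠ v}}
  (hT'iff : ∀ a b : {w : V // w ≠ v}, T'.Adj a b ↔
    (T.Adj a.1 b.1 ∨ (a.1 = u ∧ T.Adj v b.1 ∧ b.1 ≠ u) ∨
      (b.1 = u ∧ T.Adj v a.1 ∧ a.1 ≠ u)))
  {ℓ : Sym2 V → Bool} {ℓ' : Sym2 {w : V // w ≠ v} → Bool}
  (rule1 : ∀ a b : {w : V // w ≠ v}, T.Adj a.1 b.1 → ℓ' s(a, b) = ℓ s(a.1, b.1))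
  (rule2 : ∀ a b : {w : V // w ≠ v}, a.1 = u → ¬ T.Adj a.1 b.1 → T.Adj v b.1 →
    ℓ' s(a, b) = ℓ s(v, b.1))

include hT huv hT'iff rule1 rule2 in
lemma push_walk : ∀ (n : ℕ) {s t : V} (p : T.Walk s t), p.length = n →
    ∀ (hs : s ≠ v) (ht : t ≠ v), p.IsPath →
    (u ∈ p.support → v ∈ p.support → s(u, v) ∈ p.edges) →
    (v ∈ p.support → ℓ s(u, v) = false) →
    ∃ p' : T'.Walk ⟨s, hs⟩ ⟨t, ht⟩, p'.IsPath ∧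
      (∀ z : {w : V // w ≠ v}, z ∈ p'.support →
        z.1 ∈ p.support ∨ (z.1 = u ∧ v ∈ p.support)) ∧
      (p'.edges.filter ℓ').length = (p.edges.filter ℓ).length := by
  intro n
  induction n using Nat.strong_induction_on with
  | _ n ih =>
    intro s t p hlen hs ht hp hcons hl
    cases p with
    | nil =>
      refine ⟨Walk.nil, by simp, ?_, by simp⟩
      intro z hz
      simp at hz
      subst hz
      simp
    | cons h rest =>
      rename_i z
      by_cases hzv : z = v
      · -- second vertex is v
        subst hzv
        cases rest with
        | nil => exact absurd rfl ht
        | cons h2 rest2 =>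
          rename_i b
          have hvp : z ∈ (Walk.cons h (Walk.cons h2 rest2)).support := by simp
          have hluv : ℓ s(u, z) = false := hl hvp
          have hp' := hp
          rw [Walk.cons_isPath_iff] at hp'
          obtain ⟨hp2, hsnotin⟩ := hp'
          rw [Walk.cons_isPath_iff] at hp2
          obtain ⟨hp3, hvnotin⟩ := hp2
          have hbv : b ≠ z := h2.ne'
          have hlen2 : rest2.length < n := by
            simp [Walk.length_cons] at hlen; omega
          obtain ⟨p'', hp''path, hp''sup, hp''cnt⟩ :=
            ih rest2.length hlen2 rest2 rfl hbv ht hp3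
              (fun _ hv2 => absurd hv2 hvnotin) (fun hv2 => absurd hv2 hvnotin)
          by_cases hsu : s = u
          · -- skip v entirely
            have hbs : b ≠ s := by
              intro e; exact hsnotin (e ▸ (by simp : b ∈ (Walk.cons h2 rest2).support))
            have hbu : b ≠ u := hsu ▸ hbs
            have e : T'.Adj ⟨s, hs⟩ ⟨b, hbv⟩ :=
              (hT'iff _ _).mpr (Or.inr (Or.inl ⟨hsu, h2, hbu⟩))
            have hlab : ℓ' s((⟨s, hs⟩ : {w : V // w ≠ z}), ⟨b, hbv⟩) = ℓ s(z, b) := by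
              refine rule2 _ _ hsu ?_ h2
              have : ¬ T.Adj u b := tree_no_triangle hT huv h2 hbu.symm
              exact hsu ▸ this
            refine ⟨Walk.cons e p'', ?_, ?_, ?_⟩
            · rw [Walk.cons_isPath_iff]
              refine ⟨hp''path, fun hmem => ?_⟩
              rcases hp''sup _ hmem with h1 | ⟨_, h2'⟩
              · exact hsnotin (by simp [h1])
              · exact hvnotin h2'
            · intro z' hz'
              rw [Walk.support_cons, List.mem_cons] at hz'
              rcases hz' with hz' | hz'
              · subst hz'; left; simp
              · rcases hp''sup _ hz' with h1 | ⟨h1, _⟩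
                · left; simp [h1]
                · right; exact ⟨h1, hvp⟩
            · rw [Walk.edges_cons, Walk.edges_cons, Walk.edges_cons]
              have hsz : ℓ s(s, z) = false := by rw [hsu]; exact hluv
              rw [List.filter_cons, List.filter_cons, List.filter_cons, hsz, hlab]
              cases hval : ℓ s(z, b) <;> simp [hval, hp''cnt]
          · by_cases hbu : b = u
            · subst hbu
              have e : T'.Adj ⟨s, hs⟩ ⟨b, hbv⟩ :=
                (hT'iff _ _).mpr (Or.inr (Or.inr ⟨rfl, h.symm, hsu⟩))
              have hlab : ℓ' s((⟨s, hs⟩ : {w : V // w ≠ z}), ⟨b, hbv⟩) = ℓ s(s, z) := by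
                have h0 : ℓ' s((⟨b, hbv⟩ : {w : V // w ≠ z}), ⟨s, hs⟩) = ℓ s(z, s) := by
                  refine rule2 _ _ rfl ?_ h.symm
                  exact tree_no_triangle hT huv h.symm (fun e => hsu e.symm)
                rw [Sym2.eq_swap] at h0
                rw [h0, Sym2.eq_swap]
              refine ⟨Walk.cons e p'', ?_, ?_, ?_⟩
              · rw [Walk.cons_isPath_iff]
                refine ⟨hp''path, fun hmem => ?_⟩
                rcases hp''sup _ hmem with h1 | ⟨h1, _⟩
                · exact hsnotin (by simp [h1])
                · exact hsu h1
              · intro z' hz'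
                rw [Walk.support_cons, List.mem_cons] at hz'
                rcases hz' with hz' | hz'
                · subst hz'; left; simp
                · rcases hp''sup _ hz' with h1 | ⟨h1, _⟩
                  · left; simp [h1]
                  · right; exact ⟨h1, hvp⟩
              · rw [Walk.edges_cons, Walk.edges_cons, Walk.edges_cons]
                have hzb : ℓ s(z, b) = false := by rw [Sym2.eq_swap]; exact hluv
                rw [List.filter_cons, List.filter_cons, List.filter_cons, hzb, hlab]
                cases hval : ℓ s(s, z) <;> simp [hval, hp''cnt]
            · -- replace v by u
              have hunotin : u ∉ (Walk.cons h (Walk.cons h2 rest2)).support := by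
                intro hu'
                have hins := hcons hu' hvp
                rw [Walk.edges_cons, Walk.edges_cons, List.mem_cons, List.mem_cons] at hins
                rcases hins with h1 | h1 | h1
                · rw [Sym2.eq_iff] at h1
                  rcases h1 with ⟨e1, _⟩ | ⟨e1, e2⟩
                  · exact hsu e1.symm
                  · exact hs e2.symm
                · rw [Sym2.eq_iff] at h1
                  rcases h1 with ⟨e1, _⟩ | ⟨e1, e2⟩
                  · exact huv.ne e1
                  · exact hbu e1.symm
                · exact hvnotin (Walk.snd_mem_support_of_mem_edges rest2 h1)
              have e1 : T'.Adj ⟨s, hs⟩ ⟨u, huv.ne⟩ :=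
                (hT'iff _ _).mpr (Or.inr (Or.inr ⟨rfl, h.symm, hsu⟩))
              have e2 : T'.Adj ⟨u, huv.ne⟩ ⟨b, hbv⟩ :=
                (hT'iff _ _).mpr (Or.inr (Or.inl ⟨rfl, h2, hbu⟩))
              have hlab1 : ℓ' s((⟨s, hs⟩ : {w : V // w ≠ z}), ⟨u, huv.ne⟩) = ℓ s(s, z) := by
                have h0 : ℓ' s((⟨u, huv.ne⟩ : {w : V // w ≠ z}), ⟨s, hs⟩) = ℓ s(z, s) := by
                  refine rule2 _ _ rfl ?_ h.symm
                  exact tree_no_triangle hT huv h.symm (fun e => hsu e.symm)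
                rw [Sym2.eq_swap] at h0
                rw [h0, Sym2.eq_swap]
              have hlab2 : ℓ' s((⟨u, huv.ne⟩ : {w : V // w ≠ z}), ⟨b, hbv⟩) = ℓ s(z, b) :=
                rule2 _ _ rfl (tree_no_triangle hT huv h2 (fun e => hbu e.symm)) h2
              refine ⟨Walk.cons e1 (Walk.cons e2 p''), ?_, ?_, ?_⟩
              · rw [Walk.cons_isPath_iff, Walk.cons_isPath_iff]
                refine ⟨⟨hp''path, fun hmem => ?_⟩, fun hmem => ?_⟩
                · rcases hp''sup _ hmem with h1 | ⟨_, h2'⟩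
                  · exact hunotin (by simp [h1])
                  · exact hvnotin h2'
                · rw [Walk.support_cons, List.mem_cons] at hmem
                  rcases hmem with hmem | hmem
                  · exact hsu (congrArg Subtype.val hmem)
                  · rcases hp''sup _ hmem with h1 | ⟨h1, _⟩
                    · exact hsnotin (by simp [h1])
                    · exact hsu h1
              · intro z' hz'
                rw [Walk.support_cons, List.mem_cons, Walk.support_cons, List.mem_cons] at hz'
                rcases hz' with hz' | hz' | hz'
                · subst hz'; left; simp
                · subst hz'; right; exact ⟨rfl, hvp⟩
                · rcases hp''sup _ hz' with h1 | ⟨h1, _⟩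
                  · left; simp [h1]
                  · right; exact ⟨h1, hvp⟩
              · rw [Walk.edges_cons, Walk.edges_cons, Walk.edges_cons, Walk.edges_cons]
                rw [List.filter_cons, List.filter_cons, List.filter_cons, List.filter_cons,
                  hlab1, hlab2]
                cases hval : ℓ s(s, z) <;> cases hval2 : ℓ s(z, b) <;>
                  simp [hval, hval2, hp''cnt]
      · -- second vertex is not v : ordinary step
        have hp' := hp
        rw [Walk.cons_isPath_iff] at hp'
        obtain ⟨hprest, hsnotin⟩ := hp'
        have hlen1 : rest.length < n := by
          simp [Walk.length_cons] at hlen; omega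
        have hcons' : u ∈ rest.support → v ∈ rest.support → s(u, v) ∈ rest.edges := by
          intro hu' hv'
          have := hcons (by simp [hu']) (by simp [hv'])
          rw [Walk.edges_cons, List.mem_cons] at this
          rcases this with h1 | h1
          · rw [Sym2.eq_iff] at h1
            rcases h1 with ⟨_, e2⟩ | ⟨_, e2⟩
            · exact absurd e2.symm hzv
            · exact absurd e2.symm hs
          · exact h1
        obtain ⟨p'', hp''path, hp''sup, hp''cnt⟩ :=
          ih rest.length hlen1 rest rfl hzv ht hprest hcons' (fun hv' => hl (by simp [hv']))
        have e : T'.Adj ⟨s, hs⟩ ⟨z, hzv⟩ := (hT'iff _ _).mpr (Or.inl h)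
        refine ⟨Walk.cons e p'', ?_, ?_, ?_⟩
        · rw [Walk.cons_isPath_iff]
          refine ⟨hp''path, fun hmem => ?_⟩
          rcases hp''sup _ hmem with h1 | ⟨h1, h2'⟩
          · exact hsnotin h1
          · have h1' : s = u := h1
            have := hcons (by rw [Walk.support_cons]; exact List.mem_cons.mpr (Or.inl h1'.symm))
              (by simp [h2'])
            rw [Walk.edges_cons, List.mem_cons] at this
            rcases this with h3 | h3
            · rw [Sym2.eq_iff] at h3
              rcases h3 with ⟨_, e2⟩ | ⟨_, e2⟩
              · exact hzv e2.symm
              · exact hs e2.symm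
            · exact hsnotin (h1' ▸ Walk.fst_mem_support_of_mem_edges rest h3)
        · intro z' hz'
          rw [Walk.support_cons, List.mem_cons] at hz'
          rcases hz' with hz' | hz'
          · subst hz'; left; simp
          · rcases hp''sup _ hz' with h1 | ⟨h1, h2'⟩
            · left; simp [h1]
            · right; exact ⟨h1, by simp [h2']⟩
        · rw [Walk.edges_cons, Walk.edges_cons, List.filter_cons, List.filter_cons,
            rule1 _ _ h]
          cases hval : ℓ s(s, z) <;> simp [hval, hp''cnt]
end Push

def contractGraph {V : Type*} (T : SimpleGraph V) (u v : V) :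
    SimpleGraph {w : V // w ≠ v} where
  Adj a b := T.Adj a.1 b.1 ∨ (a.1 = u ∧ T.Adj v b.1 ∧ b.1 ≠ u) ∨
    (b.1 = u ∧ T.Adj v a.1 ∧ a.1 ≠ u)
  symm := by
    constructor
    intro a b h
    rcases h with h | ⟨h1, h2, h3⟩ | ⟨h1, h2, h3⟩
    exacts [Or.inl h.symm, Or.inr (Or.inr ⟨h1, h2, h3⟩), Or.inr (Or.inl ⟨h1, h2, h3⟩)]
  loopless := by
    constructor
    intro a h
    rcases h with h | ⟨h1, _, h3⟩ | ⟨h1, _, h3⟩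
    exacts [T.irrefl h, h3 h1, h3 h1]

lemma contractGraph_iff {V : Type*} (T : SimpleGraph V) (u v : V)
    (a b : {w : V // w ≠ v}) : (contractGraph T u v).Adj a b ↔
    (T.Adj a.1 b.1 ∨ (a.1 = u ∧ T.Adj v b.1 ∧ b.1 ≠ u) ∨
      (b.1 = u ∧ T.Adj v a.1 ∧ a.1 ≠ u)) := Iff.rfl

open scoped Classical in
noncomputable def contractLabel {V : Type*} (T : SimpleGraph V) (ℓ : Sym2 V → Bool)
    (u v : V) : Sym2 {w : V // w ≠ v} → Bool :=
  Sym2.lift ⟨fun a b =>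
    if a.1 = u ∧ ¬ T.Adj u b.1 ∧ T.Adj v b.1 then ℓ s(v, b.1)
    else if b.1 = u ∧ ¬ T.Adj u a.1 ∧ T.Adj v a.1 then ℓ s(v, a.1)
    else ℓ s(a.1, b.1), by
    intro a b
    dsimp only
    by_cases h1 : a.1 = u ∧ ¬ T.Adj u b.1 ∧ T.Adj v b.1 <;>
      by_cases h2 : b.1 = u ∧ ¬ T.Adj u a.1 ∧ T.Adj v a.1
    · rw [if_pos h1, if_pos h2, h1.1, h2.1]
    · rw [if_pos h1, if_neg h2, if_pos h1]
    · rw [if_neg h1, if_pos h2, if_pos h2]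
    · rw [if_neg h1, if_neg h2, if_neg h2, if_neg h1, Sym2.eq_swap]⟩

open scoped Classical in
lemma contractLabel_rule1 {V : Type*} (T : SimpleGraph V) (ℓ : Sym2 V → Bool)
    (u v : V) (a b : {w : V // w ≠ v}) (h : T.Adj a.1 b.1) :
    contractLabel T ℓ u v s(a, b) = ℓ s(a.1, b.1) := by
  rw [contractLabel, Sym2.lift_mk]
  dsimp only
  have h1 : ¬ (a.1 = u ∧ ¬ T.Adj u b.1 ∧ T.Adj v b.1) := by
    rintro ⟨e1, e2, _⟩; exact e2 (e1 ▸ h)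
  have h2 : ¬ (b.1 = u ∧ ¬ T.Adj u a.1 ∧ T.Adj v a.1) := by
    rintro ⟨e1, e2, _⟩; exact e2 (e1 ▸ h.symm)
  rw [if_neg h1, if_neg h2]

open scoped Classical in
lemma contractLabel_rule2 {V : Type*} (T : SimpleGraph V) (ℓ : Sym2 V → Bool)
    (u v : V) (a b : {w : V // w ≠ v}) (h1 : a.1 = u) (h2 : ¬ T.Adj a.1 b.1)
    (h3 : T.Adj v b.1) : contractLabel T ℓ u v s(a, b) = ℓ s(v, b.1) := by
  rw [contractLabel, Sym2.lift_mk]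
  dsimp only
  have hc : a.1 = u ∧ ¬ T.Adj u b.1 ∧ T.Adj v b.1 := ⟨h1, h1 ▸ h2, h3⟩
  rw [if_pos hc]

section Lift
variable {V : Type*} {T : SimpleGraph V} (hT : T.IsTree) {u v : V} (huv : T.Adj u v)
  {T' : SimpleGraph {w : V // w ≠ v}}
  (hT'iff : ∀ a b : {w : V // w ≠ v}, T'.Adj a b ↔
    (T.Adj a.1 b.1 ∨ (a.1 = u ∧ T.Adj v b.1 ∧ b.1 ≠ u) ∨
      (b.1 = u ∧ T.Adj v a.1 ∧ a.1 ≠ u)))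
  {ℓ : Sym2 V → Bool} {ℓ' : Sym2 {w : V // w ≠ v} → Bool}
  (rule1 : ∀ a b : {w : V // w ≠ v}, T.Adj a.1 b.1 → ℓ' s(a, b) = ℓ s(a.1, b.1))
  (rule2 : ∀ a b : {w : V // w ≠ v}, a.1 = u → ¬ T.Adj a.1 b.1 → T.Adj v b.1 →
    ℓ' s(a, b) = ℓ s(v, b.1))

include hT huv hT'iff rule1 rule2 in
lemma lift_walk_s7 : ∀ (n : ℕ) {a b : {w : V // w ≠ v}} (p' : T'.Walk a b),
    p'.length = n → p'.IsPath →
    ∃ q : T.Walk a.1 b.1, q.IsPath ∧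
      (∀ z : V, z ∈ q.support → (∃ z' ∈ p'.support, z'.1 = z) ∨ z = v) ∧
      (v ∈ q.support → (⟨u, huv.ne⟩ : {w : V // w ≠ v}) ∈ p'.support) ∧
      ((ℓ s(u, v) = false ∨ v ∉ q.support) →
        (q.edges.filter ℓ).length = (p'.edges.filter ℓ').length) := by
  intro n
  induction n using Nat.strong_induction_on with
  | _ n ih =>
    intro a b p' hlen hp'
    cases p' with
    | nil =>
      refine ⟨Walk.nil, by simp, ?_, ?_, by simp⟩
      · intro z hz
        simp at hz
        exact Or.inl ⟨a, by simp, hz.symm⟩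
      · intro hv
        simp at hv
        exact absurd hv.symm a.2
    | cons h' rest =>
      rename_i c
      have hp'' := hp'
      rw [Walk.cons_isPath_iff] at hp''
      obtain ⟨hrest, hanotin⟩ := hp''
      rcases (hT'iff a c).mp h' with hadj | ⟨ha, hvc, hcu⟩ | ⟨hc, hva, hau⟩
      · -- real edge
        have hlen1 : rest.length < n := by
          simp [Walk.length_cons] at hlen; omega
        obtain ⟨q', hq'path, hq'sup, hq'v, hq'cnt⟩ := ih rest.length hlen1 rest rfl hrest
        refine ⟨Walk.cons hadj q', ?_, ?_, ?_, ?_⟩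
        · rw [Walk.cons_isPath_iff]
          refine ⟨hq'path, fun hmem => ?_⟩
          rcases hq'sup _ hmem with ⟨z', hz', hz'eq⟩ | hz
          · exact hanotin ((Subtype.ext hz'eq : z' = a) ▸ hz')
          · exact a.2 hz
        · intro z hz
          rw [Walk.support_cons, List.mem_cons] at hz
          rcases hz with hz | hz
          · exact Or.inl ⟨a, by simp, hz.symm⟩
          · rcases hq'sup _ hz with ⟨z', hz', hz'eq⟩ | hz2
            · exact Or.inl ⟨z', by simp [hz'], hz'eq⟩
            · exact Or.inr hz2
        · intro hv
          rw [Walk.support_cons, List.mem_cons] at hv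
          rcases hv with hv | hv
          · exact absurd hv.symm a.2
          · have := hq'v hv
            rw [Walk.support_cons]
            exact List.mem_cons.mpr (Or.inr this)
        · intro Hc
          have Hc' : ℓ s(u, v) = false ∨ v ∉ q'.support := by
            rcases Hc with Hc | Hc
            · exact Or.inl Hc
            · exact Or.inr (fun hv => Hc (by simp [hv]))
          rw [Walk.edges_cons, Walk.edges_cons, List.filter_cons, List.filter_cons,
            rule1 a c hadj]
          cases hval : ℓ s(a.1, c.1) <;> simp [hval, hq'cnt Hc']
      · -- a = u, new edge : insert v
        have hlen1 : rest.length < n := by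
          simp [Walk.length_cons] at hlen; omega
        obtain ⟨q', hq'path, hq'sup, hq'v, hq'cnt⟩ := ih rest.length hlen1 rest rfl hrest
        have hua : (⟨u, huv.ne⟩ : {w : V // w ≠ v}) = a := Subtype.ext ha.symm
        have hvnotin : v ∉ q'.support := by
          intro hv
          exact hanotin (hua ▸ hq'v hv)
        have edge1 : T.Adj a.1 v := by rw [ha]; exact huv
        refine ⟨Walk.cons edge1 (Walk.cons hvc q'), ?_, ?_, ?_, ?_⟩
        · rw [Walk.cons_isPath_iff, Walk.cons_isPath_iff]
          refine ⟨⟨hq'path, hvnotin⟩, fun hmem => ?_⟩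
          rw [Walk.support_cons, List.mem_cons] at hmem
          rcases hmem with hmem | hmem
          · exact a.2 hmem
          · rcases hq'sup _ hmem with ⟨z', hz', hz'eq⟩ | hz
            · exact hanotin ((Subtype.ext hz'eq : z' = a) ▸ hz')
            · exact a.2 hz
        · intro z hz
          rw [Walk.support_cons, List.mem_cons, Walk.support_cons, List.mem_cons] at hz
          rcases hz with hz | hz | hz
          · exact Or.inl ⟨a, by simp, hz.symm⟩
          · exact Or.inr hz
          · rcases hq'sup _ hz with ⟨z', hz', hz'eq⟩ | hz2
            · exact Or.inl ⟨z', by simp [hz'], hz'eq⟩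
            · exact Or.inr hz2
        · intro _
          rw [hua]
          simp
        · intro Hc
          have hluv : ℓ s(u, v) = false := by
            rcases Hc with Hc | Hc
            · exact Hc
            · exact absurd (by simp : v ∈ (Walk.cons edge1 (Walk.cons hvc q')).support) Hc
          have hlab : ℓ' s(a, c) = ℓ s(v, c.1) := by
            refine rule2 a c ha ?_ hvc
            rw [ha]
            exact tree_no_triangle hT huv hvc hcu.symm
          have hfirst : ℓ s(a.1, v) = false := by rw [ha]; exact hluv
          rw [Walk.edges_cons, Walk.edges_cons, Walk.edges_cons,
            List.filter_cons, List.filter_cons, List.filter_cons, hfirst, hlab]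
          cases hval : ℓ s(v, c.1) <;> simp [hval, hq'cnt (Or.inl hluv)]
      · -- c = u, new edge into u : lookahead
        have huc : (⟨u, huv.ne⟩ : {w : V // w ≠ v}) = c := Subtype.ext hc.symm
        have hlab1 : ℓ' s(a, c) = ℓ s(a.1, v) := by
          have h0 : ℓ' s(c, a) = ℓ s(v, a.1) := by
            refine rule2 c a hc ?_ hva
            rw [hc]
            exact tree_no_triangle hT huv hva hau.symm
          rw [Sym2.eq_swap] at h0
          rw [h0, Sym2.eq_swap]
        cases rest with
        | nil =>
          have edge2 : T.Adj v b.1 := by rw [hc]; exact huv.symm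
          refine ⟨Walk.cons hva.symm (Walk.cons edge2 Walk.nil), ?_, ?_, ?_, ?_⟩
          · have h1 : a.1 ≠ v := a.2
            have h2 : a.1 ≠ b.1 := by rw [hc]; exact hau
            have h3 : v ≠ b.1 := fun e => b.2 e.symm
            simp [Walk.isPath_def, h1, h2, h3]
          · intro z hz
            simp at hz
            rcases hz with hz | hz | hz
            · exact Or.inl ⟨a, by simp, hz.symm⟩
            · exact Or.inr hz
            · exact Or.inl ⟨b, by simp, hz.symm⟩
          · intro _
            rw [huc]
            simp
          · intro Hc
            have hluv : ℓ s(u, v) = false := by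
              rcases Hc with Hc | Hc
              · exact Hc
              · exact absurd (by simp : v ∈ (Walk.cons hva.symm
                  (Walk.cons edge2 Walk.nil)).support) Hc
            have hsecond : ℓ s(v, b.1) = false := by
              rw [hc, Sym2.eq_swap]
              exact hluv
            simp only [Walk.edges_cons, Walk.edges_nil, List.filter_cons, hsecond, hlab1]
            cases hval : ℓ s(a.1, v) <;> simp [hval]
        | cons h2' rest2 =>
          rename_i c2
          have hp2 := hrest
          rw [Walk.cons_isPath_iff] at hp2
          obtain ⟨hrest2, hcnotin⟩ := hp2
          have hlen2 : rest2.length < n := by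
            simp [Walk.length_cons] at hlen; omega
          obtain ⟨q', hq'path, hq'sup, hq'v, hq'cnt⟩ := ih rest2.length hlen2 rest2 rfl hrest2
          have hvnotin : v ∉ q'.support := by
            intro hv
            exact hcnotin (huc ▸ hq'v hv)
          have hanotin2 : ∀ z' ∈ q'.support, z' ≠ a.1 := by
            intro z' hz' he
            rcases hq'sup _ hz' with ⟨z'', hz'', hz''eq⟩ | hz2
            · refine hanotin ?_
              have : z'' = a := Subtype.ext (hz''eq.trans he)
              rw [Walk.support_cons]
              exact List.mem_cons.mpr (Or.inr (this ▸ hz''))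
            · exact a.2 (he.symm.trans hz2)
          rcases (hT'iff c c2).mp h2' with hadj2 | ⟨_, hvc2, hc2u⟩ | ⟨_, _, hcu'⟩
          · -- through u : a.1 - v - c.1 - c2.1 - ...
            have edge2 : T.Adj v c.1 := by rw [hc]; exact huv.symm
            have hc1notin : c.1 ∉ q'.support := by
              intro hmem
              rcases hq'sup _ hmem with ⟨z', hz', hz'eq⟩ | hz
              · exact hcnotin ((Subtype.ext hz'eq : z' = c) ▸ hz')
              · exact c.2 hz
            refine ⟨Walk.cons hva.symm (Walk.cons edge2 (Walk.cons hadj2 q')), ?_, ?_, ?_, ?_⟩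
            · rw [Walk.cons_isPath_iff, Walk.cons_isPath_iff, Walk.cons_isPath_iff]
              refine ⟨⟨⟨hq'path, hc1notin⟩, fun hmem => ?_⟩, fun hmem => ?_⟩
              · rw [Walk.support_cons, List.mem_cons] at hmem
                rcases hmem with hmem | hmem
                · exact c.2 hmem.symm
                · exact hvnotin hmem
              · rw [Walk.support_cons, List.mem_cons, Walk.support_cons, List.mem_cons] at hmem
                rcases hmem with hmem | hmem | hmem
                · exact a.2 hmem
                · exact hau (hmem.trans hc)
                · exact hanotin2 _ hmem rfl
            · intro z hz
              rw [Walk.support_cons, List.mem_cons, Walk.support_cons, List.mem_cons,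
                Walk.support_cons, List.mem_cons] at hz
              rcases hz with hz | hz | hz | hz
              · exact Or.inl ⟨a, by simp, hz.symm⟩
              · exact Or.inr hz
              · exact Or.inl ⟨c, by simp, hz.symm⟩
              · rcases hq'sup _ hz with ⟨z', hz', hz'eq⟩ | hz2
                · exact Or.inl ⟨z', by simp [hz'], hz'eq⟩
                · exact Or.inr hz2
            · intro _
              rw [huc]
              simp
            · intro Hc
              have hluv : ℓ s(u, v) = false := by
                rcases Hc with Hc | Hc
                · exact Hc
                · exact absurd (by simp : v ∈ (Walk.cons hva.symm (Walk.cons edge2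
                    (Walk.cons hadj2 q'))).support) Hc
              have hsecond : ℓ s(v, c.1) = false := by
                rw [hc, Sym2.eq_swap]
                exact hluv
              rw [Walk.edges_cons, Walk.edges_cons, Walk.edges_cons, Walk.edges_cons,
                Walk.edges_cons, List.filter_cons, List.filter_cons, List.filter_cons,
                List.filter_cons, List.filter_cons, hsecond, hlab1, rule1 c c2 hadj2]
              cases hval : ℓ s(a.1, v) <;> cases hval2 : ℓ s(c.1, c2.1) <;>
                simp [hval, hval2, hq'cnt (Or.inr hvnotin)]
          · -- skip u : a.1 - v - c2.1 - ...
            refine ⟨Walk.cons hva.symm (Walk.cons hvc2 q'), ?_, ?_, ?_, ?_⟩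
            · rw [Walk.cons_isPath_iff, Walk.cons_isPath_iff]
              refine ⟨⟨hq'path, hvnotin⟩, fun hmem => ?_⟩
              rw [Walk.support_cons, List.mem_cons] at hmem
              rcases hmem with hmem | hmem
              · exact a.2 hmem
              · exact hanotin2 _ hmem rfl
            · intro z hz
              rw [Walk.support_cons, List.mem_cons, Walk.support_cons, List.mem_cons] at hz
              rcases hz with hz | hz | hz
              · exact Or.inl ⟨a, by simp, hz.symm⟩
              · exact Or.inr hz
              · rcases hq'sup _ hz with ⟨z', hz', hz'eq⟩ | hz2
                · exact Or.inl ⟨z', by simp [hz'], hz'eq⟩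
                · exact Or.inr hz2
            · intro _
              rw [huc]
              simp
            · intro _
              have hlab2 : ℓ' s(c, c2) = ℓ s(v, c2.1) := by
                refine rule2 c c2 hc ?_ hvc2
                rw [hc]
                exact tree_no_triangle hT huv hvc2 hc2u.symm
              rw [Walk.edges_cons, Walk.edges_cons, Walk.edges_cons, Walk.edges_cons,
                List.filter_cons, List.filter_cons, List.filter_cons, List.filter_cons,
                hlab1, hlab2]
              cases hval : ℓ s(a.1, v) <;> cases hval2 : ℓ s(v, c2.1) <;>
                simp [hval, hval2, hq'cnt (Or.inr hvnotin)]
          · exact absurd hc hcu'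
end Lift

section RelIff
variable {V : Type*} {T : SimpleGraph V} (hT : T.IsTree) {u v : V} (huv : T.Adj u v)
  {T' : SimpleGraph {w : V // w ≠ v}}
  (hT'iff : ∀ a b : {w : V // w ≠ v}, T'.Adj a b ↔
    (T.Adj a.1 b.1 ∨ (a.1 = u ∧ T.Adj v b.1 ∧ b.1 ≠ u) ∨
      (b.1 = u ∧ T.Adj v a.1 ∧ a.1 ≠ u)))
  {ℓ : Sym2 V → Bool} {ℓ' : Sym2 {w : V // w ≠ v} → Bool}
  (rule1 : ∀ a b : {w : V // w ≠ v}, T.Adj a.1 b.1 → ℓ' s(a, b) = ℓ s(a.1, b.1))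
  (rule2 : ∀ a b : {w : V // w ≠ v}, a.1 = u → ¬ T.Adj a.1 b.1 → T.Adj v b.1 →
    ℓ' s(a, b) = ℓ s(v, b.1))

include hT huv hT'iff rule1 rule2 in
lemma contraction_rel_iff {x y : V} (hx : x ≠ v) (hy : y ≠ v)
    (H : ℓ s(u, v) = false ∨ ∀ (p : T.Walk x y), p.IsPath → v ∉ p.support) :
    Rel1 T ℓ x y ↔ Rel1 T' ℓ' ⟨x, hx⟩ ⟨y, hy⟩ := by
  constructor
  · rintro ⟨p, hp, hcnt⟩
    obtain ⟨p', hp'path, -, hp'cnt⟩ := push_walk hT huv hT'iff rule1 rule2 p.length p rfl hx hy hp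
      (fun hu hv => edge_mem_of_support hT hp huv hu hv)
      (fun hv => by
        rcases H with H | H
        · exact H
        · exact absurd hv (H p hp))
    exact ⟨p', hp'path, hp'cnt.trans hcnt⟩
  · rintro ⟨p', hp', hcnt⟩
    obtain ⟨q, hq, -, -, hqcnt⟩ := lift_walk_s7 hT huv hT'iff rule1 rule2 p'.length p' rfl hp'
    refine ⟨q, hq, ?_⟩
    rcases H with H | H
    · rw [hqcnt (Or.inl H)]; exact hcnt
    · rw [hqcnt (Or.inr (H q hq))]; exact hcnt
end RelIff

/-- In a least resolved tree explaining a connected single-1-relation graph (with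
`~0` discrete), every `0`-edge is incident to a leaf, and every inner vertex is
incident to exactly one `0`-edge. -/
theorem least_resolved_structure
    {V : Type*} (T : SimpleGraph V) (hT : T.IsTree) (ℓ : Sym2 V → Bool)
    (hphylo : ∀ v : V, ¬ (∃ a b : V, a ≠ b ∧ T.Adj v a ∧ T.Adj v b ∧
      ∀ c, T.Adj v c → c = a ∨ c = b))
    (G : SimpleGraph {v : V // TIsLeaf T v})
    (hexpl : ∀ x y : {v : V // TIsLeaf T v},
      G.Adj x y ↔ (x ≠ y ∧ Rel1 T ℓ x.1 y.1))
    (hdisc : ∀ x y : V, TIsLeaf T x → TIsLeaf T y → Rel0 T ℓ x y → x = y)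
    (hconn : G.Connected)
    -- least resolved: no contraction of an interior edge yields a tree explaining G
    (hleast : ∀ u v : V, T.Adj u v → ¬ TIsLeaf T u → ¬ TIsLeaf T v →
      ∀ (T' : SimpleGraph {w : V // w ≠ v}),
        (∀ a b : {w : V // w ≠ v}, T'.Adj a b ↔
          (T.Adj a.1 b.1 ∨ (a.1 = u ∧ T.Adj v b.1 ∧ b.1 ≠ u) ∨
            (b.1 = u ∧ T.Adj v a.1 ∧ a.1 ≠ u))) →
        ∀ ℓ' : Sym2 {w : V // w ≠ v} → Bool,
          (∀ a b : {w : V // w ≠ v}, T.Adj a.1 b.1 → ℓ' s(a, b) = ℓ s(a.1, b.1)) →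
          (∀ a b : {w : V // w ≠ v}, a.1 = u → ¬ T.Adj a.1 b.1 → T.Adj v b.1 →
            ℓ' s(a, b) = ℓ s(v, b.1)) →
          ¬ (∀ (x y : {v' : V // TIsLeaf T v'}) (hx : x.1 ≠ v) (hy : y.1 ≠ v),
              G.Adj x y ↔ (x ≠ y ∧ Rel1 T' ℓ' ⟨x.1, hx⟩ ⟨y.1, hy⟩))) :
    (∀ a b : V, T.Adj a b → ℓ s(a, b) = false → TIsLeaf T a ∨ TIsLeaf T b) ∧
    (∀ w : V, ¬ TIsLeaf T w → ∃! a : V, T.Adj w a ∧ ℓ s(w, a) = false) := by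
  classical
  -- Part 1 : every 0-edge is incident to a leaf
  have key1 : ∀ a b : V, T.Adj a b → ℓ s(a, b) = false → TIsLeaf T a ∨ TIsLeaf T b := by
    intro a b hab h0
    by_contra hcon
    push_neg at hcon
    obtain ⟨hna, hnb⟩ := hcon
    refine hleast a b hab hna hnb (contractGraph T a b) (contractGraph_iff T a b)
      (contractLabel T ℓ a b) (contractLabel_rule1 T ℓ a b) (contractLabel_rule2 T ℓ a b) ?_
    intro x y hx hy
    refine (hexpl x y).trans (and_congr_right fun _ => ?_)
    exact contraction_rel_iff hT hab (contractGraph_iff T a b) (contractLabel_rule1 T ℓ a b)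
      (contractLabel_rule2 T ℓ a b) hx hy (Or.inl h0)
  refine ⟨key1, ?_⟩
  -- uniqueness of the 0-edge at an inner vertex
  have uniq0 : ∀ w : V, ¬ TIsLeaf T w → ∀ a b : V,
      T.Adj w a ∧ ℓ s(w, a) = false → T.Adj w b ∧ ℓ s(w, b) = false → a = b := by
    intro w hw a b ⟨hwa, hla⟩ ⟨hwb, hlb⟩
    by_contra hne
    have hA : TIsLeaf T a := (key1 w a hwa hla).resolve_left hw
    have hB : TIsLeaf T b := (key1 w b hwb hlb).resolve_left hw
    have hpath : (Walk.cons hwa.symm (Walk.cons hwb Walk.nil) : T.Walk a b).IsPath := by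
      simp [Walk.isPath_def, hne, hwa.ne', hwb.ne]
    have hrel0 : Rel0 T ℓ a b := by
      refine ⟨_, hpath, ?_⟩
      intro e he
      simp only [Walk.edges_cons, Walk.edges_nil, List.mem_cons, List.not_mem_nil,
        or_false] at he
      rcases he with he | he
      · rw [he, Sym2.eq_swap]; exact hla
      · rw [he]; exact hlb
    exact hne (hdisc a b hA hB hrel0)
  intro w hw
  suffices hex : ∃ a, T.Adj w a ∧ ℓ s(w, a) = false by
    obtain ⟨a, ha⟩ := hex
    exact ⟨a, ha, fun y hy => uniq0 w hw y a hy ha⟩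
  by_contra hno
  push_neg at hno
  have htrue : ∀ a, T.Adj w a → ℓ s(w, a) = true := by
    intro a h
    have := hno a h
    simpa using this
  -- canonical neighbor of w towards each leaf
  have hCex : ∀ z : {v' : V // TIsLeaf T v'}, ∃ a, T.Adj w a ∧
      ∀ (r : T.Walk w z.1), r.IsPath → s(w, a) ∈ r.edges := by
    intro z
    have hz_ne : w ≠ z.1 := by
      intro e
      exact hw (e ▸ z.2)
    obtain ⟨p0, hp0⟩ := (hT.existsUnique_path w z.1).exists
    obtain ⟨a, ha, hmem⟩ := exists_head_edge p0 hz_ne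
    refine ⟨a, ha, fun r hr => ?_⟩
    rw [tree_path_unique hT hr hp0]
    exact hmem
  choose cfun hcadj hcmem using hCex
  have hcuniq : ∀ (z : {v' : V // TIsLeaf T v'}) (a' : V),
      (∃ r : T.Walk w z.1, r.IsPath ∧ s(w, a') ∈ r.edges) → a' = cfun z := by
    rintro z a' ⟨r, hr, hmem⟩
    exact head_edge_unique hr hmem (hcmem z r hr)
  -- leaves in different branches at w are never adjacent in G
  have hcross : ∀ z1 z2 : {v' : V // TIsLeaf T v'}, cfun z1 ≠ cfun z2 → ¬ G.Adj z1 z2 := by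
    intro z1 z2 hne hadj
    obtain ⟨hzne, p, hp, hcnt⟩ := (hexpl z1 z2).mp hadj
    obtain ⟨q1, hq1⟩ := (hT.existsUnique_path w z1.1).exists
    obtain ⟨q2, hq2⟩ := (hT.existsUnique_path w z2.1).exists
    have hmeet : ∀ t, t ∈ q1.support → t ∈ q2.support → t = w := by
      intro t ht1 ht2
      by_contra htw
      have e1 : (q1.takeUntil t ht1).IsPath := hq1.takeUntil ht1
      have e2 : (q2.takeUntil t ht2).IsPath := hq2.takeUntil ht2
      have heq : q1.takeUntil t ht1 = q2.takeUntil t ht2 := tree_path_unique hT e1 e2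
      obtain ⟨a', ha', hmem'⟩ := exists_head_edge (q1.takeUntil t ht1) (fun e => htw e.symm)
      have m1 : s(w, a') ∈ q1.edges := q1.edges_takeUntil_subset ht1 hmem'
      have m2 : s(w, a') ∈ q2.edges := q2.edges_takeUntil_subset ht2 (heq ▸ hmem')
      have u1 : a' = cfun z1 := hcuniq z1 a' ⟨q1, hq1, m1⟩
      have u2 : a' = cfun z2 := hcuniq z2 a' ⟨q2, hq2, m2⟩
      exact hne (u1 ▸ u2 ▸ rfl)
    have hWpath : (q1.reverse.append q2).IsPath := by
      rw [Walk.isPath_def, Walk.support_append, Walk.support_reverse]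
      have hnd1 : q1.support.reverse.Nodup := by
        rw [List.nodup_reverse]
        exact hq1.support_nodup
      have hnd2 : q2.support.tail.Nodup := hq2.support_nodup.tail
      refine List.Nodup.append hnd1 hnd2 ?_
      intro t ht1 ht2
      have htw := hmeet t (List.mem_reverse.mp ht1) (List.mem_of_mem_tail ht2)
      subst htw
      have hnd := hq2.support_nodup
      rw [q2.support_eq_cons] at hnd
      exact (List.nodup_cons.mp hnd).1 ht2
    have hm1 : s(w, cfun z1) ∈ (q1.reverse.append q2).edges := by
      rw [Walk.edges_append, Walk.edges_reverse]
      exact List.mem_append.mpr (Or.inl (List.mem_reverse.mpr (hcmem z1 q1 hq1)))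
    have hm2 : s(w, cfun z2) ∈ (q1.reverse.append q2).edges := by
      rw [Walk.edges_append]
      exact List.mem_append.mpr (Or.inr (hcmem z2 q2 hq2))
    have hlab1 : ℓ s(w, cfun z1) = true := htrue _ (hcadj z1)
    have hlab2 : ℓ s(w, cfun z2) = true := htrue _ (hcadj z2)
    have hdistinct : s(w, cfun z1) ≠ s(w, cfun z2) := fun e => hne (Sym2.congr_right.mp e)
    have hPW : p = q1.reverse.append q2 := tree_path_unique hT hp hWpath
    rw [hPW] at hcnt
    have hf1 : s(w, cfun z1) ∈ (q1.reverse.append q2).edges.filter ℓ :=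
      List.mem_filter.mpr ⟨hm1, by simp [hlab1]⟩
    have hf2 : s(w, cfun z2) ∈ (q1.reverse.append q2).edges.filter ℓ :=
      List.mem_filter.mpr ⟨hm2, by simp [hlab2]⟩
    have hndf : ((q1.reverse.append q2).edges.filter ℓ).Nodup :=
      (hWpath.isTrail.edges_nodup).filter ℓ
    have hsub : ({s(w, cfun z1), s(w, cfun z2)} : Finset (Sym2 V)) ⊆
        ((q1.reverse.append q2).edges.filter ℓ).toFinset := by
      intro e he
      rw [Finset.mem_insert, Finset.mem_singleton] at he
      rcases he with he | he <;> rw [he] <;> rw [List.mem_toFinset]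
      exacts [hf1, hf2]
    have hcard : 2 ≤ ((q1.reverse.append q2).edges.filter ℓ).toFinset.card := by
      have := Finset.card_le_card hsub
      rwa [Finset.card_pair hdistinct] at this
    have hlen := List.toFinset_card_le ((q1.reverse.append q2).edges.filter ℓ)
    omega
  -- the canonical neighbor is constant on connected components of G
  have hCprop : ∀ z1 z2 : {v' : V // TIsLeaf T v'}, G.Adj z1 z2 → cfun z1 = cfun z2 := by
    intro z1 z2 h
    by_contra hne
    exact hcross z1 z2 hne h
  have hCreach : ∀ z1 z2 : {v' : V // TIsLeaf T v'}, G.Reachable z1 z2 →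
      cfun z1 = cfun z2 := by
    intro z1 z2 hr
    obtain ⟨pw⟩ := hr
    induction pw with
    | nil => rfl
    | cons hadj rest ih => exact (hCprop _ _ hadj).trans ih
  obtain ⟨x0⟩ := hconn.nonempty
  have hallc : ∀ z : {v' : V // TIsLeaf T v'}, cfun z = cfun x0 :=
    fun z => hCreach z x0 (hconn z x0)
  have hwc0 : T.Adj w (cfun x0) := hcadj x0
  -- pick a neighbor d of w different from cfun x0
  have hd : ∃ d, T.Adj w d ∧ d ≠ cfun x0 := by
    by_contra hnd
    push_neg at hnd
    exact hw ⟨cfun x0, hwc0, fun y hy => hnd y hy⟩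
  obtain ⟨d, hwd, hdc0⟩ := hd
  have hdleaf : ¬ TIsLeaf T d := by
    intro hdl
    have hzc : cfun ⟨d, hdl⟩ = cfun x0 := hallc _
    have hsingle : (Walk.cons hwd Walk.nil : T.Walk w d).IsPath := by
      simp [Walk.isPath_def, hwd.ne]
    have hmem := hcmem ⟨d, hdl⟩ _ hsingle
    simp only [Walk.edges_cons, Walk.edges_nil, List.mem_cons, List.not_mem_nil,
      or_false] at hmem
    have : cfun ⟨d, hdl⟩ = d := Sym2.congr_right.mp hmem
    exact hdc0 (this ▸ hzc)
  -- every path between leaves avoids w and d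
  have hwavoid : ∀ (x y : {v' : V // TIsLeaf T v'}) (p : T.Walk x.1 y.1),
      p.IsPath → w ∉ p.support := by
    intro x y p hp hwmem
    have hp2 : (p.dropUntil w hwmem).IsPath := hp.dropUntil hwmem
    have hm2 : s(w, cfun x0) ∈ (p.dropUntil w hwmem).edges := by
      have := hcmem y _ hp2
      rwa [hallc y] at this
    have hp1r : (p.takeUntil w hwmem).reverse.IsPath := (hp.takeUntil hwmem).reverse
    have hm1 : s(w, cfun x0) ∈ (p.takeUntil w hwmem).edges := by
      have := hcmem x _ hp1r
      rw [hallc x] at this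
      rwa [Walk.edges_reverse, List.mem_reverse] at this
    have hed : p.edges = (p.takeUntil w hwmem).edges ++ (p.dropUntil w hwmem).edges := by
      conv_lhs => rw [← p.take_spec hwmem]
      rw [Walk.edges_append]
    have hnd := hp.isTrail.edges_nodup
    rw [hed] at hnd
    exact (List.disjoint_of_nodup_append hnd) hm1 hm2
  have havoid : ∀ (x y : {v' : V // TIsLeaf T v'}) (p : T.Walk x.1 y.1),
      p.IsPath → d ∉ p.support := by
    intro x y p hp hdmem
    have hw1 : w ∉ p.support := hwavoid x y p hp
    have hp1 : (p.takeUntil d hdmem).IsPath := hp.takeUntil hdmem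
    have hwnotin1 : w ∉ (p.takeUntil d hdmem).support :=
      fun hm => hw1 (p.support_takeUntil_subset hdmem hm)
    have hrpath : ((p.takeUntil d hdmem).append (Walk.cons hwd.symm Walk.nil)).IsPath := by
      rw [Walk.isPath_def, Walk.support_append]
      have : (Walk.cons hwd.symm Walk.nil : T.Walk d w).support.tail = [w] := by
        simp
      rw [this]
      refine List.Nodup.append hp1.support_nodup (by simp) ?_
      intro t ht1 ht2
      simp at ht2
      subst ht2
      exact hwnotin1 ht1
    have hmm : s(w, cfun x0) ∈
        ((p.takeUntil d hdmem).append (Walk.cons hwd.symm Walk.nil)).reverse.edges := by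
      have := hcmem x _ hrpath.reverse
      rwa [hallc x] at this
    rw [Walk.edges_reverse, List.mem_reverse, Walk.edges_append] at hmm
    rcases List.mem_append.mp hmm with h1 | h1
    · exact hwnotin1 (Walk.fst_mem_support_of_mem_edges _ h1)
    · simp only [Walk.edges_cons, Walk.edges_nil, List.mem_cons, List.not_mem_nil,
        or_false] at h1
      rw [Sym2.eq_iff] at h1
      rcases h1 with ⟨e1, _⟩ | ⟨_, e2⟩
      · exact hwd.ne e1
      · exact hdc0 e2.symm
  -- contract the edge w–d and contradict least-resolvedness
  refine hleast w d hwd hw hdleaf (contractGraph T w d) (contractGraph_iff T w d)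
    (contractLabel T ℓ w d) (contractLabel_rule1 T ℓ w d) (contractLabel_rule2 T ℓ w d) ?_
  intro x y hx hy
  refine (hexpl x y).trans (and_congr_right fun _ => ?_)
  exact contraction_rel_iff hT hwd (contractGraph_iff T w d) (contractLabel_rule1 T ℓ w d)
    (contractLabel_rule2 T ℓ w d) hx hy (Or.inr (fun p hp => havoid x y p hp))
end

section
/- In a rooted 0/1-edge-labeled tree with discrete ~0, if x ⇀1 y and y ⇀1 z for leaves x, y, z, then any tree explaining these relations displays the rooted triple yz|x; moreover, with u = lca(x,y) = lca(x,z) and v = lca(y,z), the paths P(u,v) and P(v,z) each contain exactly one 1-edge while P(u,x) and P(v,y) contain only 0-edges. -/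
open SimpleGraph

/-- `u` is the least common ancestor of `x` and `y` in the tree `T` rooted at `ρ`:
`u` lies on the path from `x` to `y` and on both paths from `x` and from `y` to the
root. -/
def IsLca {V : Type*} (T : SimpleGraph V) (ρ x y u : V) : Prop :=
  ∀ (p : T.Walk x y) (q : T.Walk x ρ) (r : T.Walk y ρ),
    p.IsPath → q.IsPath → r.IsPath →
    u ∈ p.support ∧ u ∈ q.support ∧ u ∈ r.support

/-- The antisymmetric single-1-relation `x ⇀1 y`: with `u = lca(x,y)`, all edges on
`P(u,x)` are labeled `0` and exactly one edge on `P(u,y)` is labeled `1`. -/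
def DRel1 {V : Type*} (T : SimpleGraph V) (ρ : V) (ℓ : Sym2 V → Bool)
    (x y : V) : Prop :=
  ∃ u : V, IsLca T ρ x y u ∧ Rel0 T ℓ u x ∧ Rel1 T ℓ u y

/-- The rooted triple `ab|c` is displayed: the path from `a` to `b` does not
intersect the path from `c` to the root `ρ`. -/
def DisplaysTriple {V : Type*} (T : SimpleGraph V) (ρ a b c : V) : Prop :=
  ∀ (p : T.Walk a b) (q : T.Walk c ρ), p.IsPath → q.IsPath →
    ∀ w ∈ p.support, w ∉ q.support

section Helpers
variable {V : Type*} {T : SimpleGraph V}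

private lemma upath (hT : T.IsTree) {a b : V} (p q : T.Walk a b)
    (hp : p.IsPath) (hq : q.IsPath) : p = q :=
  ((isTree_iff_existsUnique_path.mp hT).2 a b).unique hp hq

private lemma epath (hT : T.IsTree) (a b : V) : ∃ p : T.Walk a b, p.IsPath := by
  classical
  obtain ⟨w⟩ := hT.isConnected.preconnected a b
  exact ⟨w.toPath.1, w.toPath.2⟩

private lemma disj_of_append {a b c : V} {p : T.Walk a b} {q : T.Walk b c}
    (h : (p.append q).IsPath) {w : V}
    (h1 : w ∈ p.support) (h2 : w ∈ q.support.tail) : False := by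
  have hn := h.support_nodup
  rw [Walk.support_append, List.nodup_append] at hn
  exact hn.2.2 w h1 w h2 rfl

private lemma mem_tail_of_ne {a b w : V} {p : T.Walk a b}
    (h : w ∈ p.support) (hw : w ≠ a) : w ∈ p.support.tail := by
  rw [p.support_eq_cons] at h
  rcases List.mem_cons.mp h with h | h
  · exact absurd h hw
  · exact h

private lemma append_path {a b c : V} {p : T.Walk a b} {q : T.Walk b c}
    (hp : p.IsPath) (hq : q.IsPath)
    (h : ∀ w, w ∈ p.support → w ∈ q.support → w = b) : (p.append q).IsPath := by
  rw [Walk.isPath_def, Walk.support_append, List.nodup_append]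
  refine ⟨hp.support_nodup, ?_, ?_⟩
  · have := hq.support_nodup
    rw [q.support_eq_cons] at this
    exact this.of_cons
  · intro w h1 w' h2 hww'
    subst hww'
    have hb : w = b := h w h1 (List.mem_of_mem_tail h2)
    subst hb
    have := hq.support_nodup
    rw [q.support_eq_cons] at this
    exact (List.nodup_cons.mp this).1 h2

end Helpers

/-- If `x ⇀1 y` and `y ⇀1 z` in a rooted edge-labeled tree with discrete `~0`, then
the tree displays the rooted triple `yz|x`; moreover, with `u = lca(x,y) = lca(x,z)`
and `v = lca(y,z)`, the paths `P(u,v)` and `P(v,z)` each contain exactly one `1`-edge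
while `P(u,x)` and `P(v,y)` contain only `0`-edges. -/
theorem case_i_structure {V : Type*} (T : SimpleGraph V) (hT : T.IsTree) (ρ : V)
    (ℓ : Sym2 V → Bool) (x y z : V)
    (hx : TIsLeaf T x) (hy : TIsLeaf T y) (hz : TIsLeaf T z)
    (hdisc : ∀ a b : V, TIsLeaf T a → TIsLeaf T b → Rel0 T ℓ a b → a = b)
    (hxy : DRel1 T ρ ℓ x y) (hyz : DRel1 T ρ ℓ y z) :
    DisplaysTriple T ρ y z x ∧
    ∃ u v : V, IsLca T ρ x y u ∧ IsLca T ρ x z u ∧ IsLca T ρ y z v ∧ u ≠ v ∧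
      Rel1 T ℓ u v ∧ Rel1 T ℓ v z ∧ Rel0 T ℓ u x ∧ Rel0 T ℓ v y := by
  classical
  obtain ⟨u, hu, h0ux, h1uy⟩ := hxy
  obtain ⟨v, hv, h0vy, h1vz⟩ := hyz
  obtain ⟨pxy, hpxy⟩ := epath hT x y
  obtain ⟨pxρ, hpxρ⟩ := epath hT x ρ
  obtain ⟨pyρ, hpyρ⟩ := epath hT y ρ
  obtain ⟨pzρ, hpzρ⟩ := epath hT z ρ
  obtain ⟨pyz, hpyz⟩ := epath hT y z
  obtain ⟨hu_xy, hu_xρ, hu_yρ⟩ := hu pxy pxρ pyρ hpxy hpxρ hpyρ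
  obtain ⟨hv_yz, hv_yρ, hv_zρ⟩ := hv pyz pyρ pzρ hpyz hpyρ hpzρ
  set q1 := pyρ.takeUntil v hv_yρ with hq1def
  set q2 := pyρ.dropUntil v hv_yρ with hq2def
  have hq1 : q1.IsPath := hpyρ.takeUntil hv_yρ
  have hq2 : q2.IsPath := hpyρ.dropUntil hv_yρ
  have hspec1 : q1.append q2 = pyρ := pyρ.take_spec hv_yρ
  -- all q1 edges are 0
  obtain ⟨p0, hp0, h0⟩ := id h0vy
  have hq1e : ∀ e ∈ q1.edges, ℓ e = false := by
    intro e he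
    have heq : q1.reverse = p0 := upath hT _ _ hq1.reverse hp0
    apply h0
    rw [← heq, Walk.edges_reverse, List.mem_reverse]
    exact he
  obtain ⟨p1, hp1, h1⟩ := id h1uy
  -- u is not on the segment from y to v
  have hu_nq1 : u ∉ q1.support := by
    intro hmem
    have ht : (q1.takeUntil u hmem).IsPath := hq1.takeUntil hmem
    have heq : (q1.takeUntil u hmem).reverse = p1 := upath hT _ _ ht.reverse hp1
    have hnil : (q1.takeUntil u hmem).reverse.edges.filter ℓ = [] := by
      rw [Walk.edges_reverse]
      apply List.filter_eq_nil_iff.mpr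
      intro e he
      simp [hq1e e (q1.edges_takeUntil_subset hmem (List.mem_reverse.mp he))]
    rw [heq] at hnil
    rw [hnil] at h1
    simp at h1
  have hu_q2 : u ∈ q2.support := by
    have h' := hu_yρ
    rw [← hspec1, Walk.mem_support_append_iff] at h'
    exact h'.resolve_left hu_nq1
  set r1 := q2.takeUntil u hu_q2 with hr1def
  set E := q2.dropUntil u hu_q2 with hEdef
  have hr1 : r1.IsPath := hq2.takeUntil hu_q2
  have hE : E.IsPath := hq2.dropUntil hu_q2
  have hspec2 : r1.append E = q2 := q2.take_spec hu_q2
  have huv : u ≠ v := by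
    rintro rfl
    exact hu_nq1 q1.end_mem_support
  -- the path from u to y
  have hspec3 : (q1.append r1).append E = pyρ := by
    rw [← Walk.append_assoc, hspec2, hspec1]
  have hq1r1 : (q1.append r1).IsPath := by
    have h' := hpxρ
    have h'' := hpyρ
    rw [← hspec3] at h''
    exact h''.of_append_left
  set puy := (q1.append r1).reverse with hpuydef
  have hpuy : puy.IsPath := hq1r1.reverse
  have hpuy_eq : p1 = puy := upath hT _ _ hp1 hpuy
  have hq1nil : q1.edges.filter ℓ = [] := by
    apply List.filter_eq_nil_iff.mpr
    intro e he
    simp [hq1e e he]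
  have hfil_r1 : (r1.edges.filter ℓ).length = 1 := by
    have h1' := h1
    rw [hpuy_eq, hpuydef, Walk.edges_reverse, Walk.edges_append] at h1'
    simpa [List.filter_append, hq1nil] using h1'
  -- decomposition of pxρ
  set A := pxρ.takeUntil u hu_xρ with hAdef
  have hA : A.IsPath := hpxρ.takeUntil hu_xρ
  have hE2 : pxρ.dropUntil u hu_xρ = E := upath hT _ _ (hpxρ.dropUntil hu_xρ) hE
  have hspec4 : A.append E = pxρ := by rw [← hE2]; exact pxρ.take_spec hu_xρ
  -- A edges zero
  obtain ⟨p2, hp2, h02⟩ := id h0ux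
  have hA2 : A.reverse = p2 := upath hT _ _ hA.reverse hp2
  have hAe : ∀ e ∈ A.edges, ℓ e = false := by
    intro e he
    apply h02
    rw [← hA2, Walk.edges_reverse, List.mem_reverse]
    exact he
  -- decomposition of pxy
  have hAxy : pxy.takeUntil u hu_xy = A := upath hT _ _ (hpxy.takeUntil hu_xy) hA
  have hDxy : pxy.dropUntil u hu_xy = puy := upath hT _ _ (hpxy.dropUntil hu_xy) hpuy
  have hspec5 : A.append puy = pxy := by rw [← hAxy, ← hDxy]; exact pxy.take_spec hu_xy
  have hpuyBC : puy = r1.reverse.append q1.reverse := by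
    rw [hpuydef, Walk.reverse_append]
  have hP1 : (A.append (r1.reverse.append q1.reverse)).IsPath := by
    rw [← hpuyBC, hspec5]; exact hpxy
  -- decomposition of pzρ
  set Dz := pzρ.takeUntil v hv_zρ with hDzdef
  have hDz : Dz.IsPath := hpzρ.takeUntil hv_zρ
  have hrest : pzρ.dropUntil v hv_zρ = q2 := upath hT _ _ (hpzρ.dropUntil hv_zρ) hq2
  have hspec6 : Dz.append q2 = pzρ := by rw [← hrest]; exact pzρ.take_spec hv_zρ
  have hP3 : (Dz.append (r1.append E)).IsPath := by
    rw [hspec2, hspec6]; exact hpzρ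
  set D := Dz.reverse with hDdef
  have hD : D.IsPath := hDz.reverse
  -- decomposition of pyz
  have hq1yz : pyz.takeUntil v hv_yz = q1 := upath hT _ _ (hpyz.takeUntil hv_yz) hq1
  have hDyz : pyz.dropUntil v hv_yz = D := upath hT _ _ (hpyz.dropUntil hv_yz) hD
  have hspec7 : q1.append D = pyz := by rw [← hq1yz, ← hDyz]; exact pyz.take_spec hv_yz
  -- membership basics
  have hu_tail_r1 : u ∈ r1.support.tail :=
    mem_tail_of_ne r1.end_mem_support huv
  have hv_tail_B : v ∈ r1.reverse.support.tail :=
    mem_tail_of_ne r1.reverse.end_mem_support huv.symm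
  have hE_sub : ∀ w ∈ E.support, w ∈ (r1.append E).support.tail := by
    intro w hw
    rw [Walk.tail_support_append, List.mem_append]
    rcases eq_or_ne w u with rfl | hne
    · exact Or.inl hu_tail_r1
    · exact Or.inr (mem_tail_of_ne hw hne)
  have hC_sub : ∀ w ∈ q1.reverse.support, w ∈ (r1.reverse.append q1.reverse).support.tail := by
    intro w hw
    rw [Walk.tail_support_append, List.mem_append]
    rcases eq_or_ne w v with rfl | hne
    · exact Or.inl hv_tail_B
    · exact Or.inr (mem_tail_of_ne hw hne)
  -- disjointness facts
  have hD1 : ∀ w, w ∈ A.support → w ∈ q1.support → False := by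
    intro w h1' h2'
    exact disj_of_append hP1 h1'
      (hC_sub w (by rw [Walk.support_reverse, List.mem_reverse]; exact h2'))
  have hD2 : ∀ w, w ∈ q1.support → w ∈ E.support → False := by
    intro w h1' h2'
    have hPyρ' : (q1.append (r1.append E)).IsPath := by
      rw [hspec2, hspec1]; exact hpyρ
    exact disj_of_append hPyρ' h1' (hE_sub w h2')
  have hD3 : ∀ w, w ∈ Dz.support → w ∈ E.support → False := by
    intro w h1' h2'
    exact disj_of_append hP3 h1' (hE_sub w h2')
  have hD5 : ∀ w, w ∈ A.support → w ∈ r1.support → w = u := by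
    intro w h1' h2'
    rcases eq_or_ne w u with rfl | hne
    · rfl
    exfalso
    apply disj_of_append hP1 h1'
    rw [Walk.tail_support_append, List.mem_append]
    left
    exact mem_tail_of_ne (by rw [Walk.support_reverse, List.mem_reverse]; exact h2') hne
  have hD6 : ∀ w, w ∈ r1.support → w ∈ Dz.support → w = v := by
    intro w h1' h2'
    rcases eq_or_ne w v with rfl | hne
    · rfl
    exfalso
    apply disj_of_append hP3 h2'
    rw [Walk.tail_support_append, List.mem_append]
    left
    exact mem_tail_of_ne h1' hne
  have hvA : v ∉ A.support := by
    intro hvmem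
    apply disj_of_append hP1 hvmem
    rw [Walk.tail_support_append, List.mem_append]
    exact Or.inl hv_tail_B
  have hD4 : ∀ w, w ∈ A.support → w ∈ Dz.support → False := by
    intro w hwA hwD
    have hf1 : ((A.dropUntil w hwA).append E).IsPath := by
      have heq' : (A.takeUntil w hwA).append ((A.dropUntil w hwA).append E) = pxρ := by
        rw [Walk.append_assoc, A.take_spec hwA, hspec4]
      have h' := hpxρ
      rw [← heq'] at h'
      exact h'.of_append_right
    have hf2 : ((Dz.dropUntil w hwD).append q2).IsPath := by
      have heq' : (Dz.takeUntil w hwD).append ((Dz.dropUntil w hwD).append q2) = pzρ := by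
        rw [Walk.append_assoc, Dz.take_spec hwD, hspec6]
      have h' := hpzρ
      rw [← heq'] at h'
      exact h'.of_append_right
    have heq : (A.dropUntil w hwA).append E = (Dz.dropUntil w hwD).append q2 :=
      upath hT _ _ hf1 hf2
    have hvmem : v ∈ ((A.dropUntil w hwA).append E).support := by
      rw [heq, Walk.mem_support_append_iff]
      exact Or.inr q2.start_mem_support
    rw [Walk.mem_support_append_iff] at hvmem
    rcases hvmem with h' | h'
    · exact hvA (A.support_dropUntil_subset hwA h')
    · exact hD2 v q1.end_mem_support h'
  -- the path from x to z
  have hBD : (r1.reverse.append D).IsPath := by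
    apply append_path hr1.reverse hD
    intro w h1' h2'
    apply hD6 w
    · rw [Walk.support_reverse, List.mem_reverse] at h1'; exact h1'
    · rw [hDdef, Walk.support_reverse, List.mem_reverse] at h2'; exact h2'
  have hpxz : (A.append (r1.reverse.append D)).IsPath := by
    apply append_path hA hBD
    intro w h1' h2'
    rw [Walk.mem_support_append_iff] at h2'
    rcases h2' with h2' | h2'
    · exact hD5 w h1' (by rw [Walk.support_reverse, List.mem_reverse] at h2'; exact h2')
    · exact absurd (hD4 w h1'
        (by rw [hDdef, Walk.support_reverse, List.mem_reverse] at h2'; exact h2')) not_false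
  have hlca_xz : IsLca T ρ x z u := by
    intro p q r hp hq hr
    refine ⟨?_, ?_, ?_⟩
    · rw [upath hT p _ hp hpxz, Walk.mem_support_append_iff]
      exact Or.inl A.end_mem_support
    · rw [upath hT q pxρ hq hpxρ]
      exact hu_xρ
    · rw [upath hT r pzρ hr hpzρ, ← hspec6, Walk.mem_support_append_iff]
      exact Or.inr hu_q2
  have hdisp : DisplaysTriple T ρ y z x := by
    intro p q hp hq w hwp hwq
    rw [upath hT p pyz hp hpyz, ← hspec7, Walk.mem_support_append_iff] at hwp
    rw [upath hT q pxρ hq hpxρ, ← hspec4, Walk.mem_support_append_iff] at hwq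
    rcases hwp with h1' | h1' <;> rcases hwq with h2' | h2'
    · exact hD1 w h2' h1'
    · exact hD2 w h1' h2'
    · exact hD4 w h2' (by rw [hDdef, Walk.support_reverse, List.mem_reverse] at h1'; exact h1')
    · exact hD3 w (by rw [hDdef, Walk.support_reverse, List.mem_reverse] at h1'; exact h1') h2'
  refine ⟨hdisp, u, v, hu, hlca_xz, hv, huv, ?_, h1vz, h0ux, h0vy⟩
  exact ⟨r1.reverse, hr1.reverse, by simpa [Walk.edges_reverse] using hfil_r1⟩
end

section
/- In a rooted 0/1-edge-labeled tree with discrete ~0, there are no three distinct leaves x, y, z with x ⇀1 y and z ⇀1 y. -/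
open SimpleGraph

private lemma tree_walk_eq {V : Type*} {T : SimpleGraph V} (hT : T.IsTree) {a b : V}
    {p q : T.Walk a b} (hp : p.IsPath) (hq : q.IsPath) : p = q :=
  (hT.existsUnique_path a b).unique hp hq

private lemma takeUntil_order {V : Type*} {T : SimpleGraph V} [DecidableEq V] {a b : V}
    (r : T.Walk a b) : ∀ (u v : V) (hu : u ∈ r.support) (hv : v ∈ r.support),
      v ∈ (r.takeUntil u hu).support ∨ u ∈ (r.takeUntil v hv).support := by
  induction r with
  | nil =>
    intro u v hu hv
    rw [Walk.mem_support_nil_iff] at hu hv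
    subst hu; subst hv
    left; exact Walk.start_mem_support _
  | @cons a c b h p ih =>
    intro u v hu hv
    by_cases hua : a = u
    · subst hua
      right; exact Walk.start_mem_support _
    · by_cases hva : a = v
      · subst hva
        left; exact Walk.start_mem_support _
      · rw [Walk.support_cons, List.mem_cons] at hu hv
        have hu' : u ∈ p.support := hu.resolve_left (fun h1 => hua h1.symm)
        have hv' : v ∈ p.support := hv.resolve_left (fun h1 => hva h1.symm)
        rcases ih u v hu' hv' with h1 | h1
        · left
          simp only [Walk.takeUntil, dif_neg hua]
          rw [Walk.support_cons, List.mem_cons]; exact Or.inr h1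
        · right
          simp only [Walk.takeUntil, dif_neg hva]
          rw [Walk.support_cons, List.mem_cons]; exact Or.inr h1

private lemma core {V : Type*} {T : SimpleGraph V} [DecidableEq V] (hT : T.IsTree)
    (ℓ : Sym2 V → Bool)
    (hdisc : ∀ a b : V, TIsLeaf T a → TIsLeaf T b → Rel0 T ℓ a b → a = b)
    {x z y u v : V}
    (hx : TIsLeaf T x) (hz : TIsLeaf T z)
    (s : T.Walk y u) (hs : s.IsPath) (hvs : v ∈ s.support)
    (h0x : Rel0 T ℓ u x) (h1u : Rel1 T ℓ u y)
    (h0z : Rel0 T ℓ v z) (h1v : Rel1 T ℓ v y) : x = z := by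
  obtain ⟨p, hp, hp1⟩ := h1u
  obtain ⟨q, hq, hq1⟩ := h1v
  -- p.reverse = s
  have hps : p.reverse = s := tree_walk_eq hT hp.reverse hs
  have hqs : q.reverse = s.takeUntil v hvs := tree_walk_eq hT hq.reverse (hs.takeUntil hvs)
  have hsedges : (s.edges.filter ℓ).length = 1 := by
    rw [← hps, Walk.edges_reverse, List.filter_reverse, List.length_reverse]; exact hp1
  have htedges : ((s.takeUntil v hvs).edges.filter ℓ).length = 1 := by
    rw [← hqs, Walk.edges_reverse, List.filter_reverse, List.length_reverse]; exact hq1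
  have hsplit : s.edges = (s.takeUntil v hvs).edges ++ (s.dropUntil v hvs).edges := by
    conv_lhs => rw [← s.take_spec hvs]
    exact Walk.edges_append _ _
  have hdrop0 : ∀ e ∈ (s.dropUntil v hvs).edges, ℓ e = false := by
    have : (((s.takeUntil v hvs).edges ++ (s.dropUntil v hvs).edges).filter ℓ).length = 1 := by
      rw [← hsplit]; exact hsedges
    rw [List.filter_append, List.length_append, htedges] at this
    have h0 : (s.dropUntil v hvs).edges.filter ℓ = [] :=
      List.length_eq_zero_iff.1 (by omega)
    intro e he
    have h2 := List.filter_eq_nil_iff.1 h0 e he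
    simpa using h2
  obtain ⟨wx, hwx, hwx0⟩ := h0x
  obtain ⟨wz, hwz, hwz0⟩ := h0z
  -- walk from x to z with all edges 0
  set W : T.Walk x z := wx.reverse.append ((s.dropUntil v hvs).reverse.append wz) with hW
  have hW0 : ∀ e ∈ W.edges, ℓ e = false := by
    intro e he
    rw [hW, Walk.edges_append, Walk.edges_append, Walk.edges_reverse, Walk.edges_reverse] at he
    simp only [List.mem_append, List.mem_reverse] at he
    rcases he with h | h | h
    · exact hwx0 e h
    · exact hdrop0 e h
    · exact hwz0 e h
  exact hdisc x z hx hz ⟨W.bypass, W.bypass_isPath,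
    fun e he => hW0 e (W.edges_bypass_subset he)⟩

/-- In a rooted 0/1-edge-labeled tree with discrete `~0`, there are no three distinct
leaves `x`, `y`, `z` with `x ⇀1 y` and `z ⇀1 y`. -/
theorem no_common_head {V : Type*} (T : SimpleGraph V) (hT : T.IsTree) (ρ : V)
    (ℓ : Sym2 V → Bool)
    (hdisc : ∀ a b : V, TIsLeaf T a → TIsLeaf T b → Rel0 T ℓ a b → a = b) :
    ¬ ∃ x y z : V, TIsLeaf T x ∧ TIsLeaf T y ∧ TIsLeaf T z ∧
      x ≠ y ∧ x ≠ z ∧ y ≠ z ∧ DRel1 T ρ ℓ x y ∧ DRel1 T ρ ℓ z y := by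
  classical
  rintro ⟨x, y, z, hx, hy, hz, hxy, hxz, hyz, ⟨u, hLu, h0x, h1u⟩, ⟨v, hLv, h0z, h1v⟩⟩
  -- fixed paths
  obtain ⟨r, hr, -⟩ := hT.existsUnique_path y ρ
  obtain ⟨pxy, hpxy, -⟩ := hT.existsUnique_path x y
  obtain ⟨qx, hqx, -⟩ := hT.existsUnique_path x ρ
  obtain ⟨pzy, hpzy, -⟩ := hT.existsUnique_path z y
  obtain ⟨qz, hqz, -⟩ := hT.existsUnique_path z ρ
  have hur : u ∈ r.support := (hLu pxy qx r hpxy hqx hr).2.2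
  have hvr : v ∈ r.support := (hLv pzy qz r hpzy hqz hr).2.2
  rcases takeUntil_order r u v hur hvr with hcase | hcase
  · exact hxz (core hT ℓ hdisc hx hz (r.takeUntil u hur) (hr.takeUntil hur) hcase
      h0x h1u h0z h1v)
  · exact hxz (core hT ℓ hdisc hz hx (r.takeUntil v hvr) (hr.takeUntil hvr) hcase
      h0z h1v h0x h1u).symm
end

section
/- Let T be a rooted 0/1-edge-labeled tree with discrete ~0 and leaves x, y, z. If x ⇀1 y and y ⇀1 z then x ~1 z fails and x ~0 z fails; in fact the path from x to z contains exactly two edges labeled 1. -/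
open SimpleGraph

namespace TwoOneAux

open SimpleGraph Walk

variable {V : Type*} {T : SimpleGraph V} (ℓ : Sym2 V → Bool)

/-- edge label count of a walk -/
def cnt {a b : V} (w : T.Walk a b) : ℕ := (w.edges.filter ℓ).length

lemma cnt_append {a b c : V} (p : T.Walk a b) (q : T.Walk b c) :
    cnt ℓ (p.append q) = cnt ℓ p + cnt ℓ q := by
  simp [cnt, Walk.edges_append, List.filter_append]

lemma cnt_reverse {a b : V} (p : T.Walk a b) : cnt ℓ p.reverse = cnt ℓ p := by
  simp [cnt, Walk.edges_reverse, List.filter_reverse]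

lemma cnt_cons {a b c : V} (h : T.Adj a b) (p : T.Walk b c) :
    cnt ℓ (Walk.cons h p) = (if ℓ s(a, b) then 1 else 0) + cnt ℓ p := by
  by_cases he : ℓ s(a, b)
  · simp [cnt, Walk.edges_cons, List.filter_cons, he]; omega
  · simp [cnt, Walk.edges_cons, List.filter_cons, he]

lemma cnt_split [DecidableEq V] {a b m : V} (p : T.Walk a b) (h : m ∈ p.support) :
    cnt ℓ p = cnt ℓ (p.takeUntil m h) + cnt ℓ (p.dropUntil m h) := by
  conv_lhs => rw [← Walk.take_spec p h]
  exact cnt_append ℓ _ _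

/-- In a tree, every walk contains the edges of the path (with matching label parity). -/
lemma walk_vs_path [DecidableEq V] (hT : T.IsTree) {a b : V} (w : T.Walk a b) :
    ∀ (p : T.Walk a b), p.IsPath →
      (∀ e ∈ p.edges, e ∈ w.edges) ∧ cnt ℓ p % 2 = cnt ℓ w % 2 := by
  induction w with
  | nil =>
    intro p hp
    have : p = Walk.nil := (hT.existsUnique_path _ _).unique hp Walk.IsPath.nil
    subst this
    simp
  | @cons a a' b h w' ih =>
    intro p hp
    by_cases hmem : a' ∈ p.support
    · -- p = cons h (p.dropUntil a')
      have htake : p.takeUntil a' hmem = Walk.cons h Walk.nil := by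
        refine (hT.existsUnique_path a a').unique (hp.takeUntil hmem) ?_
        refine Walk.IsPath.nil.cons ?_
        simp [h.ne]
      have hspec := Walk.take_spec p hmem
      rw [htake] at hspec
      have hdrop : p = Walk.cons h (p.dropUntil a' hmem) := by
        conv_lhs => rw [← hspec]
        simp
      have hdp : (p.dropUntil a' hmem).IsPath := hp.dropUntil hmem
      obtain ⟨hsub, hpar⟩ := ih (p.dropUntil a' hmem) hdp
      constructor
      · intro e he
        rw [hdrop] at he
        rw [Walk.edges_cons] at he ⊢
        rcases List.mem_cons.1 he with h1 | h1
        · exact List.mem_cons.2 (Or.inl h1)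
        · exact List.mem_cons.2 (Or.inr (hsub e h1))
      · rw [hdrop, cnt_cons, cnt_cons]
        omega
    · -- cons h.symm p is the path from a' to b
      have hp' : (Walk.cons h.symm p).IsPath := hp.cons hmem
      obtain ⟨hsub, hpar⟩ := ih (Walk.cons h.symm p) hp'
      constructor
      · intro e he
        rw [Walk.edges_cons]
        refine List.mem_cons.2 (Or.inr ?_)
        exact hsub e (by rw [Walk.edges_cons]; exact List.mem_cons.2 (Or.inr he))
      · rw [cnt_cons] at hpar
        rw [cnt_cons]
        have : s(a', a) = s(a, a') := Sym2.eq_swap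
        rw [this] at hpar
        omega

end TwoOneAux

open TwoOneAux

/-- If `x ⇀1 y` and `y ⇀1 z` in a rooted 0/1-edge-labeled tree with discrete `~0`,
then neither `x ~1 z` nor `x ~0 z` holds; in fact the path from `x` to `z` contains
exactly two edges labeled `1`. -/
theorem two_one_edges {V : Type*} (T : SimpleGraph V) (hT : T.IsTree) (ρ : V)
    (ℓ : Sym2 V → Bool) (x y z : V)
    (hx : TIsLeaf T x) (hy : TIsLeaf T y) (hz : TIsLeaf T z)
    (hdisc : ∀ a b : V, TIsLeaf T a → TIsLeaf T b → Rel0 T ℓ a b → a = b)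
    (hxy : DRel1 T ρ ℓ x y) (hyz : DRel1 T ρ ℓ y z) :
    ¬ Rel1 T ℓ x z ∧ ¬ Rel0 T ℓ x z ∧
      ∃ p : T.Walk x z, p.IsPath ∧ (p.edges.filter ℓ).length = 2 := by
  haveI : DecidableEq V := Classical.decEq V
  obtain ⟨u, hu, ⟨p₁, hp₁, h₁0⟩, ⟨p₂, hp₂, h₂1⟩⟩ := hxy
  obtain ⟨v, hv, ⟨p₃, hp₃, h₃0⟩, ⟨p₄, hp₄, h₄1⟩⟩ := hyz
  have huniq : ∀ {a b : V} (p q : T.Walk a b), p.IsPath → q.IsPath → p = q :=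
    fun p q hp hq => (hT.existsUnique_path _ _).unique hp hq
  have hpath : ∀ a b : V, ∃ p : T.Walk a b, p.IsPath :=
    fun a b => (hT.existsUnique_path a b).exists
  obtain ⟨pxy, hpxy⟩ := hpath x y
  obtain ⟨pyz, hpyz⟩ := hpath y z
  obtain ⟨pxz, hpxz⟩ := hpath x z
  obtain ⟨P, hP⟩ := hpath y ρ
  obtain ⟨pxρ, hpxρ⟩ := hpath x ρ
  obtain ⟨pzρ, hpzρ⟩ := hpath z ρ
  obtain ⟨hu_xy, hu_xρ, hu_yρ⟩ := hu pxy pxρ P hpxy hpxρ hP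
  obtain ⟨hv_yz, hv_yρ, hv_zρ⟩ := hv pyz P pzρ hpyz hP hpzρ
  -- basic counts
  have hc1 : cnt ℓ p₁ = 0 := by
    simp only [cnt, List.length_eq_zero_iff]
    exact List.filter_eq_nil_iff.2 fun e he => by simp [h₁0 e he]
  have hc3 : cnt ℓ p₃ = 0 := by
    simp only [cnt, List.length_eq_zero_iff]
    exact List.filter_eq_nil_iff.2 fun e he => by simp [h₃0 e he]
  have hc2 : cnt ℓ p₂ = 1 := h₂1
  have hc4 : cnt ℓ p₄ = 1 := h₄1
  -- split P at u : takeUntil = p₂.reverse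
  have hPu : P.takeUntil u hu_yρ = p₂.reverse :=
    huniq _ _ (hP.takeUntil hu_yρ) hp₂.reverse
  have hPv : P.takeUntil v hv_yρ = p₃.reverse :=
    huniq _ _ (hP.takeUntil hv_yρ) hp₃.reverse
  have hsplitu := cnt_split ℓ P hu_yρ
  have hsplitv := cnt_split ℓ P hv_yρ
  rw [hPu, cnt_reverse, hc2] at hsplitu
  rw [hPv, cnt_reverse, hc3] at hsplitv
  -- cnt Rv = 1 + cnt Ru
  have hRv_Ru : cnt ℓ (P.dropUntil v hv_yρ) = 1 + cnt ℓ (P.dropUntil u hu_yρ) := by omega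
  -- split pzρ at v
  have hzv : pzρ.takeUntil v hv_zρ = p₄.reverse :=
    huniq _ _ (hpzρ.takeUntil hv_zρ) hp₄.reverse
  have hzdrop : pzρ.dropUntil v hv_zρ = P.dropUntil v hv_yρ :=
    huniq _ _ (hpzρ.dropUntil hv_zρ) (hP.dropUntil hv_yρ)
  have hsplitz := cnt_split ℓ pzρ hv_zρ
  rw [hzv, cnt_reverse, hc4, hzdrop] at hsplitz
  -- split pxρ at u
  have hxu : pxρ.takeUntil u hu_xρ = p₁.reverse :=
    huniq _ _ (hpxρ.takeUntil hu_xρ) hp₁.reverse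
  have hxdrop : pxρ.dropUntil u hu_xρ = P.dropUntil u hu_yρ :=
    huniq _ _ (hpxρ.dropUntil hu_xρ) (hP.dropUntil hu_yρ)
  have hsplitx := cnt_split ℓ pxρ hu_xρ
  rw [hxu, cnt_reverse, hc1, hxdrop] at hsplitx
  -- cnt pxy = 1
  have hxyt : pxy.takeUntil u hu_xy = p₁.reverse :=
    huniq _ _ (hpxy.takeUntil hu_xy) hp₁.reverse
  have hxyd : pxy.dropUntil u hu_xy = p₂ :=
    huniq _ _ (hpxy.dropUntil hu_xy) hp₂
  have hcxy : cnt ℓ pxy = 1 := by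
    have := cnt_split ℓ pxy hu_xy
    rw [hxyt, cnt_reverse, hc1, hxyd, hc2] at this
    omega
  -- cnt pyz = 1
  have hyzt : pyz.takeUntil v hv_yz = p₃.reverse :=
    huniq _ _ (hpyz.takeUntil hv_yz) hp₃.reverse
  have hyzd : pyz.dropUntil v hv_yz = p₄ :=
    huniq _ _ (hpyz.dropUntil hv_yz) hp₄
  have hcyz : cnt ℓ pyz = 1 := by
    have := cnt_split ℓ pyz hv_yz
    rw [hyzt, cnt_reverse, hc3, hyzd, hc4] at this
    omega
  -- the walk W = pxy ++ pyz
  have hcW : cnt ℓ (pxy.append pyz) = 2 := by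
    rw [cnt_append, hcxy, hcyz]
  obtain ⟨hsub, hpar⟩ := walk_vs_path ℓ hT (pxy.append pyz) pxz hpxz
  rw [hcW] at hpar
  -- cnt pxz ≤ 2
  have hle : cnt ℓ pxz ≤ 2 := by
    have hnodup : (pxz.edges.filter ℓ).Nodup := hpxz.edges_nodup.filter ℓ
    have hsub' : (pxz.edges.filter ℓ) ⊆ ((pxy.append pyz).edges.filter ℓ) := by
      intro e he
      rw [List.mem_filter] at he ⊢
      exact ⟨hsub e he.1, he.2⟩
    have := (hnodup.subperm hsub').length_le
    rw [show ((pxy.append pyz).edges.filter ℓ).length = cnt ℓ (pxy.append pyz) from rfl,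
      hcW] at this
    exact this
  -- cnt pxz ≠ 0
  have hne : cnt ℓ pxz ≠ 0 := by
    intro h0
    have hall : ∀ e ∈ pxz.edges, ℓ e = false := by
      intro e he
      by_contra hc
      have : e ∈ pxz.edges.filter ℓ := List.mem_filter.2 ⟨he, by simpa using hc⟩
      rw [List.length_eq_zero_iff.1 h0] at this
      simp at this
    have hxz : x = z := hdisc x z hx hz ⟨pxz, hpxz, hall⟩
    subst hxz
    have : pxρ = pzρ := huniq _ _ hpxρ hpzρ
    rw [this] at hsplitx
    omega
  have hc2' : cnt ℓ pxz = 2 := by omega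
  refine ⟨?_, ?_, ⟨pxz, hpxz, hc2'⟩⟩
  · rintro ⟨q, hq, hq1⟩
    have : q = pxz := huniq _ _ hq hpxz
    rw [this] at hq1
    exact absurd hc2' (by rw [show cnt ℓ pxz = (pxz.edges.filter ℓ).length from rfl, hq1]; omega)
  · rintro ⟨q, hq, hq0⟩
    have : q = pxz := huniq _ _ hq hpxz
    subst this
    have : cnt ℓ q = 0 := by
      simp only [cnt, List.length_eq_zero_iff]
      exact List.filter_eq_nil_iff.2 fun e he => by simp [hq0 e he]
    omega
end

section
/- In a connected directed graph Q whose underlying graph is a tree, a vertex v admits an orientation-compatible rooting (i.e., all edges incident to v point away from v and more generally every edge can be kept pointing away from v after deleting, for each symmetric pair, one direction) if and only if v is a central vertex: for every directed edge xy of Q, either xy or yx points away from v, where a directed edge xy points away from v iff the undirected path from v to x does not contain y. -/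
open SimpleGraph

/-- In a directed graph `D` whose underlying undirected graph is a tree, the directed
edge `x y` points away from `v` if the unique undirected path from `v` to `x` avoids
`y`. -/
def PointsAwayFrom {V : Type*} (D : V → V → Prop) (v x y : V) : Prop :=
  ∀ p : (SimpleGraph.fromRel D).Walk v x, p.IsPath → y ∉ p.support

/-- `v` is a central vertex of the directed graph `D`: for every directed edge `x y`
of `D`, either `x y` points away from `v`, or the reverse edge `y x` is present in
`D` and points away from `v`. -/
def CentralVertex {V : Type*} (D : V → V → Prop) (v : V) : Prop :=
  ∀ x y : V, D x y →
    (PointsAwayFrom D v x y ∨ (D y x ∧ PointsAwayFrom D v y x))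

/-- In a connected directed graph `Q` (given by `D`, possibly containing both
directions of some edges) whose underlying graph is a tree, a vertex `v` admits an
orientation-compatible rooting — i.e. one can delete, for each symmetric pair, one of
the two directions so that every remaining directed edge points away from `v` — if
and only if `v` is a central vertex. -/
theorem rooting_iff_central {V : Type*} (D : V → V → Prop)
    (htree : (SimpleGraph.fromRel D).IsTree) (v : V) :
    (∃ D' : V → V → Prop,
      (∀ x y : V, D' x y → D x y) ∧
      (∀ x y : V, D x y → (D' x y ∨ D' y x)) ∧
      (∀ x y : V, D' x y → ¬ D' y x) ∧
      (∀ x y : V, D' x y → PointsAwayFrom D v x y)) ↔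
    CentralVertex D v := by
  classical
  constructor
  · rintro ⟨D', hsub, hcov, hasym, haway⟩ x y hxy
    rcases hcov x y hxy with h | h
    · exact Or.inl (haway x y h)
    · exact Or.inr ⟨hsub y x h, haway y x h⟩
  · intro hc
    refine ⟨fun x y => D x y ∧ PointsAwayFrom D v x y, fun x y h => h.1, ?_, ?_, fun x y h => h.2⟩
    · intro x y hxy
      rcases hc x y hxy with h | ⟨h1, h2⟩
      · exact Or.inl ⟨hxy, h⟩
      · exact Or.inr ⟨h1, h2⟩
    · rintro x y ⟨hxy, hpxy⟩ ⟨hyx, hpyx⟩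
      have hadj : (SimpleGraph.fromRel D).Adj x y := by
        refine ⟨?_, Or.inl hxy⟩
        rintro rfl
        obtain ⟨p, hp⟩ := ((htree.isConnected.preconnected v x).some.toPath : (SimpleGraph.fromRel D).Path v x)
        exact hpxy p hp (p.end_mem_support)
      obtain ⟨p, hp⟩ := ((htree.isConnected.preconnected v x).some.toPath : (SimpleGraph.fromRel D).Path v x)
      have hy : y ∉ p.support := hpxy p hp
      have hq : (p.concat hadj).IsPath := by
        rw [SimpleGraph.Walk.isPath_def, SimpleGraph.Walk.support_concat,
          List.nodup_append]
        exact ⟨hp.support_nodup, List.nodup_singleton y,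
          fun a ha b hb => by simp at hb; subst hb; exact fun h => hy (h ▸ ha)⟩
      exact hpyx (p.concat hadj) hq (by
        rw [SimpleGraph.Walk.support_concat]
        exact List.mem_append_left _ p.end_mem_support)
end

section
/- If a set R of rooted triples contains (ab|c) and (ad|b), then any rooted tree displaying all triples of R also displays (bd|c) and (ad|c). -/
open SimpleGraph

/-- For a walk `q : z → x` with `x ∈ S`, there is a first vertex `m` of `q` in `S`,
with an initial segment of `q` from `z` to `m` meeting `S` only at `m`. -/
lemma exists_first_hit {V : Type*} {G : SimpleGraph V} (S : Set V)
    {z x : V} (q : G.Walk z x) (hx : x ∈ S) :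
    ∃ m ∈ S, ∃ q₁ : G.Walk z m, (∀ u ∈ q₁.support, u ∈ q.support) ∧
      (∀ u ∈ q₁.support, u ∈ S → u = m) := by
  induction q with
  | nil =>
    exact ⟨_, hx, SimpleGraph.Walk.nil, by simp, by simp +contextual⟩
  | @cons u v w h q' ih =>
    by_cases hu : u ∈ S
    · exact ⟨u, hu, SimpleGraph.Walk.nil, by simp, by simp +contextual⟩
    · obtain ⟨m, hm, q₁, hsub, hfirst⟩ := ih hx
      refine ⟨m, hm, SimpleGraph.Walk.cons h q₁, ?_, ?_⟩
      · intro s hs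
        rw [Walk.support_cons] at hs ⊢
        rcases List.mem_cons.1 hs with rfl | hs
        · exact List.mem_cons_self
        · exact List.mem_cons_of_mem _ (hsub _ hs)
      · intro s hs hsS
        rw [Walk.support_cons] at hs
        rcases List.mem_cons.1 hs with rfl | hs
        · exact absurd hsS hu
        · exact hfirst _ hs hsS

/-- Appending two paths that meet only in the common endpoint gives a path. -/
lemma isPath_append' {V : Type*} {G : SimpleGraph V} {u v w : V}
    {p : G.Walk u v} {q : G.Walk v w} (hp : p.IsPath) (hq : q.IsPath)
    (h : ∀ x, x ∈ p.support → x ∈ q.support → x = v) : (p.append q).IsPath := by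
  rw [Walk.isPath_def, Walk.support_append]
  have hq' : q.support = v :: q.support.tail := q.support_eq_cons
  have hqt : q.support.tail.Nodup := by
    have := hq.support_nodup
    rw [hq'] at this
    exact this.of_cons
  have hvnt : v ∉ q.support.tail := by
    have := hq.support_nodup
    rw [hq'] at this
    exact (List.nodup_cons.1 this).1
  refine List.Nodup.append hp.support_nodup hqt ?_
  intro x hxp hxt
  have hxq : x ∈ q.support := by rw [hq']; exact List.mem_cons_of_mem _ hxt
  have := h x hxp hxq
  subst this
  exact hvnt hxt

/-- In a tree, any path from `x` to `z` lies in the union of (the supports of)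
any walk from `x` to `y` and any walk from `y` to `z`. -/
lemma path_support_union {V : Type*} {G : SimpleGraph V} (hT : G.IsTree) {x y z : V}
    (p : G.Walk x y) (q : G.Walk y z) (r : G.Walk x z) (hr : r.IsPath) :
    ∀ u ∈ r.support, u ∈ p.support ∨ u ∈ q.support := by
  classical
  have hb := (p.append q).bypass_isPath
  have heq := (hT.existsUnique_path x z).unique hr hb
  intro u hu
  rw [heq] at hu
  have := (p.append q).support_bypass_subset hu
  exact (Walk.mem_support_append_iff _ _).1 this

/-- Median-type lemma: given paths `b → ρ` and `w → ρ`, there is a vertex `m` on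
both of them that also lies on a path from `b` to `w`. -/
lemma median_lemma {V : Type*} {G : SimpleGraph V} {b w ρ : V}
    (pbr : G.Walk b ρ) (hbr : pbr.IsPath) (pwr : G.Walk w ρ) (hwr : pwr.IsPath) :
    ∃ m, m ∈ pbr.support ∧ m ∈ pwr.support ∧
      ∃ pbw : G.Walk b w, pbw.IsPath ∧ m ∈ pbw.support := by
  classical
  obtain ⟨m, hmS, q₁, hsub, hfirst⟩ :=
    exists_first_hit {u | u ∈ pbr.support} pwr pbr.end_mem_support
  have hmbr : m ∈ pbr.support := hmS
  have hmwr : m ∈ pwr.support := hsub m q₁.end_mem_support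
  set q₂ := q₁.bypass with hq₂
  have hq₂p : q₂.IsPath := q₁.bypass_isPath
  have hq₂sub : ∀ u ∈ q₂.support, u ∈ q₁.support := fun u hu => q₁.support_bypass_subset hu
  set t := pbr.takeUntil m hmbr with ht
  have htp : t.IsPath := hbr.takeUntil hmbr
  have htsub : ∀ u ∈ t.support, u ∈ pbr.support :=
    fun u hu => pbr.support_takeUntil_subset hmbr hu
  refine ⟨m, hmbr, hmwr, t.append q₂.reverse, ?_, ?_⟩
  · refine isPath_append' htp hq₂p.reverse ?_
    intro x hxt hxq
    rw [Walk.support_reverse, List.mem_reverse] at hxq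
    exact hfirst x (hq₂sub x hxq) (htsub x hxt)
  · rw [Walk.mem_support_append_iff]
    exact Or.inl t.end_mem_support

/-- Triple inference rule: every rooted tree displaying the triples `(ab|c)` and
`(ad|b)` also displays `(bd|c)` and `(ad|c)`. Hence if a set `R` of triples contains
`(ab|c)` and `(ad|b)`, then `R ⊢ (bd|c)` and `R ⊢ (ad|c)`. -/
theorem triple_inference {V : Type*} (T : SimpleGraph V) (hT : T.IsTree) (ρ : V)
    (a b c d : V)
    (ha : TIsLeaf T a) (hb : TIsLeaf T b) (hc : TIsLeaf T c) (hd : TIsLeaf T d)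
    (hab : a ≠ b) (hac : a ≠ c) (had : a ≠ d) (hbc : b ≠ c) (hbd : b ≠ d)
    (hcd : c ≠ d)
    (h1 : DisplaysTriple T ρ a b c) (h2 : DisplaysTriple T ρ a d b) :
    DisplaysTriple T ρ b d c ∧ DisplaysTriple T ρ a d c := by
  classical
  obtain ⟨pab, hpab, -⟩ := hT.existsUnique_path a b
  have hadc : DisplaysTriple T ρ a d c := by
    intro p q hp hq w hwp hwq
    obtain ⟨pbr, hbr, -⟩ := hT.existsUnique_path b ρ
    set pwr := q.dropUntil w hwq with hpwr
    have hwrp : pwr.IsPath := hq.dropUntil hwq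
    have hwrsub : ∀ u ∈ pwr.support, u ∈ q.support :=
      fun u hu => q.support_dropUntil_subset hwq hu
    obtain ⟨m, hmbr, hmwr, pbw, hpbw, hmbw⟩ := median_lemma pbr hbr pwr hwrp
    set paw := p.takeUntil w hwp with hpaw
    have hawsub : ∀ u ∈ paw.support, u ∈ p.support :=
      fun u hu => p.support_takeUntil_subset hwp hu
    rcases path_support_union hT pab.reverse paw pbw hpbw m hmbw with hm | hm
    · rw [Walk.support_reverse, List.mem_reverse] at hm
      exact h1 pab q hpab hq m hm (hwrsub m hmwr)
    · exact h2 p pbr hp hbr m (hawsub m hm) hmbr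
  refine ⟨?_, hadc⟩
  intro p q hp hq w hwp hwq
  obtain ⟨pad, hpad, -⟩ := hT.existsUnique_path a d
  rcases path_support_union hT pab.reverse pad p hp w hwp with hm | hm
  · rw [Walk.support_reverse, List.mem_reverse] at hm
    exact h1 pab q hpab hq w hm hwq
  · exact hadc pad q hpad hq w hm hwq
end
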